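/- arXiv:1801.04312 — 7 statements merged into one kernel-verified Lean document; each statement's English description precedes it below -/
import Mathlib

section
/- Let A be a ring and let 𝒞 be a class of right A-modules (closed under isomorphisms) that is closed under arbitrary direct sums and under quotient modules. Then Filt 𝒞, the class of 𝒞-filtered right A-modules, is a torsion class in Mod-A, i.e. it is closed under arbitrary direct sums, extensions and quotient modules. -/
universe u

open DirectSum

section Defs

variable {A : Type u} [Ring A]

/-- A class of modules is closed under isomorphisms. -/
def IsoClosed (𝒞 : ModuleCat.{u} A → Prop) : Prop :=
  ∀ (M N : ModuleCat.{u} A), (M ≃ₗ[A] N) → 𝒞 M → 𝒞 N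

/-- A class of modules is closed under quotient modules (epimorphic images). -/
def ClosedUnderQuotients (𝒞 : ModuleCat.{u} A → Prop) : Prop :=
  ∀ (M N : ModuleCat.{u} A) (f : M →ₗ[A] N), Function.Surjective f → 𝒞 M → 𝒞 N

/-- A class of modules is closed under extensions. -/
def ClosedUnderExtensions (𝒞 : ModuleCat.{u} A → Prop) : Prop :=
  ∀ (X Y Z : ModuleCat.{u} A) (f : X →ₗ[A] Y) (g : Y →ₗ[A] Z),
    Function.Injective f → Function.Surjective g →
    LinearMap.range f = LinearMap.ker g → 𝒞 X → 𝒞 Z → 𝒞 Y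

/-- A class of modules is closed under arbitrary direct sums. -/
def ClosedUnderDirectSums (𝒞 : ModuleCat.{u} A → Prop) : Prop :=
  ∀ (ι : Type u) (M : ι → ModuleCat.{u} A), (∀ i, 𝒞 (M i)) →
    𝒞 (ModuleCat.of A (⨁ i, (M i : Type u)))

/-- A class of modules is closed under arbitrary direct products. -/
def ClosedUnderProducts (𝒞 : ModuleCat.{u} A → Prop) : Prop :=
  ∀ (ι : Type u) (M : ι → ModuleCat.{u} A), (∀ i, 𝒞 (M i)) →
    𝒞 (ModuleCat.of A (∀ i, (M i : Type u)))

/-- A class of modules is closed under kernels of homomorphisms between its members. -/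
def ClosedUnderKernels (𝒞 : ModuleCat.{u} A → Prop) : Prop :=
  ∀ (M N : ModuleCat.{u} A) (f : M →ₗ[A] N), 𝒞 M → 𝒞 N →
    𝒞 (ModuleCat.of A (LinearMap.ker f))

/-- A class of modules is closed under cokernels of homomorphisms between its members. -/
def ClosedUnderCokernels (𝒞 : ModuleCat.{u} A → Prop) : Prop :=
  ∀ (M N : ModuleCat.{u} A) (f : M →ₗ[A] N), 𝒞 M → 𝒞 N →
    𝒞 (ModuleCat.of A ((N : Type u) ⧸ LinearMap.range f))

/-- A torsion class in Mod-A: an isomorphism-closed class of modules closed under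
quotients, extensions and arbitrary direct sums. -/
def IsTorsionClass (𝒯 : ModuleCat.{u} A → Prop) : Prop :=
  IsoClosed 𝒯 ∧ ClosedUnderQuotients 𝒯 ∧ ClosedUnderExtensions 𝒯 ∧ ClosedUnderDirectSums 𝒯

/-- `Gen 𝒞`: modules admitting a surjection from a direct sum of modules in `𝒞`. -/
def Gen (𝒞 : ModuleCat.{u} A → Prop) : ModuleCat.{u} A → Prop :=
  fun N => ∃ (ι : Type u) (M : ι → ModuleCat.{u} A)
    (f : (⨁ i, (M i : Type u)) →ₗ[A] N),
    (∀ i, 𝒞 (M i)) ∧ Function.Surjective f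

/-- `GenM T`: modules admitting a surjection from a direct sum of copies of `T`. -/
def GenM (T : ModuleCat.{u} A) : ModuleCat.{u} A → Prop :=
  fun N => ∃ (ι : Type u) (f : (ι →₀ (T : Type u)) →ₗ[A] N), Function.Surjective f

/-- `Filt 𝒞`: modules admitting an ordinal-indexed filtration whose consecutive factors
are isomorphic to modules in `𝒞`. -/
def Filt (𝒞 : ModuleCat.{u} A → Prop) : ModuleCat.{u} A → Prop :=
  fun M => ∃ (μ : Ordinal.{u}) (F : Ordinal.{u} → Submodule A M),
    Monotone F ∧ F 0 = ⊥ ∧ F μ = ⊤ ∧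
    (∀ ν ≤ μ, Order.IsSuccLimit ν → F ν = ⨆ (l : Ordinal.{u}) (_ : l < ν), F l) ∧
    (∀ l < μ, ∃ C : ModuleCat.{u} A, 𝒞 C ∧
      Nonempty ((↥(F (l + 1)) ⧸ (F l).comap (F (l + 1)).subtype) ≃ₗ[A] (C : Type u)))

/-- `FiltGen 𝒞 = Filt (Gen 𝒞)`. -/
def FiltGen (𝒞 : ModuleCat.{u} A → Prop) : ModuleCat.{u} A → Prop := Filt (Gen 𝒞)

/-- `aSub 𝒯 = 𝔞(𝒯)`: modules `X` in `𝒯` such that every homomorphism from a module of `𝒯`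
to `X` has kernel in `𝒯`. -/
def aSub (𝒯 : ModuleCat.{u} A → Prop) : ModuleCat.{u} A → Prop :=
  fun X => 𝒯 X ∧ ∀ (Y : ModuleCat.{u} A) (g : Y →ₗ[A] X), 𝒯 Y →
    𝒯 (ModuleCat.of A (LinearMap.ker g))

/-- A projective presentation `P →σ→ Q →π→ T → 0` of the module `T`. -/
structure ProjPres (T : ModuleCat.{u} A) where
  P : ModuleCat.{u} A
  Q : ModuleCat.{u} A
  σ : P →ₗ[A] Q
  π : Q →ₗ[A] T
  projP : Module.Projective A P
  projQ : Module.Projective A Q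
  exact : LinearMap.range σ = LinearMap.ker π
  surj : Function.Surjective π

/-- `Dclass σ = 𝒟_σ`: modules `X` such that `Hom(σ, X)` is surjective. -/
def Dclass {P Q : ModuleCat.{u} A} (σ : P →ₗ[A] Q) : ModuleCat.{u} A → Prop :=
  fun X => Function.Surjective (fun φ : Q →ₗ[A] (X : Type u) => φ.comp σ)

/-- A module `T` is silting if it has a projective presentation `σ` with `𝒟_σ = Gen T`. -/
def IsSilting (T : ModuleCat.{u} A) : Prop :=
  ∃ pp : ProjPres T, Dclass pp.σ = GenM T

/-- `T` is partial silting with respect to the projective presentation `pp`. -/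
def IsPartialSiltingWrt {T : ModuleCat.{u} A} (pp : ProjPres T) : Prop :=
  IsTorsionClass (Dclass pp.σ) ∧ Dclass pp.σ T

/-- A presilting presentation: every direct sum of copies of `T` lies in `𝒟_σ`. -/
def IsPresilting {T : ModuleCat.{u} A} (pp : ProjPres T) : Prop :=
  ∀ ι : Type u, Dclass pp.σ (ModuleCat.of A (ι →₀ (T : Type u)))

/-- `X ∈ Add T`: `X` is a direct summand of a direct sum of copies of `T`. -/
def memAdd (T X : ModuleCat.{u} A) : Prop :=
  ∃ (ι : Type u) (i : X →ₗ[A] (ι →₀ (T : Type u))) (r : (ι →₀ (T : Type u)) →ₗ[A] X),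
    r.comp i = LinearMap.id

/-- `f : N → X` is a left `Add T`-approximation. -/
def IsLeftAddApprox (T : ModuleCat.{u} A) {N X : ModuleCat.{u} A} (f : N →ₗ[A] X) : Prop :=
  memAdd T X ∧ ∀ (Z : ModuleCat.{u} A), memAdd T Z → ∀ g : N →ₗ[A] Z,
    ∃ h : X →ₗ[A] Z, h.comp f = g

/-- A submodule `N` of `M` is superfluous if `K ⊔ N = ⊤` implies `K = ⊤`. -/
def IsSuperfluous {M : ModuleCat.{u} A} (N : Submodule A M) : Prop :=
  ∀ K : Submodule A M, K ⊔ N = ⊤ → K = ⊤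

/-- A minimal projective presentation: `π` is a projective cover, and the induced map
`P → Ker π` is a projective cover (equivalently, `Ker σ` is superfluous in `P`). -/
def IsMinimalPres {T : ModuleCat.{u} A} (pp : ProjPres T) : Prop :=
  IsSuperfluous (LinearMap.ker pp.π) ∧ IsSuperfluous (LinearMap.ker pp.σ)

/-- A torsion class in mod-A: a torsion class consisting of finitely generated
(equivalently, over a finite dimensional algebra, finite dimensional) modules. -/
def IsTorsionClassfd (𝒯 : ModuleCat.{u} A → Prop) : Prop :=
  (∀ M, 𝒯 M → Module.Finite A M) ∧ IsoClosed 𝒯 ∧ ClosedUnderQuotients 𝒯 ∧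
    ClosedUnderExtensions 𝒯

/-- A subcategory `𝒳` of mod-A is functorially finite if every finite dimensional module
admits a left and a right `𝒳`-approximation. -/
def FunctoriallyFinite (𝒳 : ModuleCat.{u} A → Prop) : Prop :=
  (∀ N : ModuleCat.{u} A, Module.Finite A N →
    ∃ (X : ModuleCat.{u} A) (f : N →ₗ[A] X), 𝒳 X ∧
      ∀ (X' : ModuleCat.{u} A), 𝒳 X' → ∀ g : N →ₗ[A] X', ∃ h : X →ₗ[A] X', h.comp f = g) ∧
  (∀ N : ModuleCat.{u} A, Module.Finite A N →
    ∃ (X : ModuleCat.{u} A) (f : X →ₗ[A] N), 𝒳 X ∧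
      ∀ (X' : ModuleCat.{u} A), 𝒳 X' → ∀ g : X' →ₗ[A] N, ∃ h : X' →ₗ[A] X, f.comp h = g)

/-- A bireflective subcategory of Mod-A: isomorphism-closed and closed under products,
coproducts, kernels and cokernels. -/
def Bireflective (𝒞 : ModuleCat.{u} A → Prop) : Prop :=
  IsoClosed 𝒞 ∧ ClosedUnderProducts 𝒞 ∧ ClosedUnderDirectSums 𝒞 ∧
    ClosedUnderKernels 𝒞 ∧ ClosedUnderCokernels 𝒞

end Defs

section TorsionProof

variable {A : Type u} [Ring A]

/-- Auxiliary predicate: every proper quotient of `M` contains a nonzero submodule in `𝒞`. -/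
def Pcl (𝒞 : ModuleCat.{u} A → Prop) (M : ModuleCat.{u} A) : Prop :=
  ∀ N : Submodule A M, N ≠ ⊤ → ∃ S : Submodule A ((M : Type u) ⧸ N), S ≠ ⊥ ∧ 𝒞 (ModuleCat.of A S)

lemma pcl_key {𝒞 : ModuleCat.{u} A → Prop} (h_iso : IsoClosed 𝒞)
    {M : ModuleCat.{u} A} (hP : Pcl 𝒞 M)
    {W : Type u} [AddCommGroup W] [Module A W]
    (K' : Submodule A M) (hK' : K' ≠ ⊤)
    (ψ : ((M : Type u) ⧸ K') →ₗ[A] W) (hψ : Function.Injective ψ) :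
    ∃ S : Submodule A W, S ≠ ⊥ ∧ 𝒞 (ModuleCat.of A S) := by
  obtain ⟨S0, hS0, hSC⟩ := hP K' hK'
  refine ⟨S0.map ψ, ?_, ?_⟩
  · obtain ⟨y, hy, hy0⟩ := Submodule.ne_bot_iff _ |>.1 hS0
    exact Submodule.ne_bot_iff _ |>.2
      ⟨ψ y, Submodule.mem_map_of_mem hy, fun h => hy0 (hψ (by simpa using h))⟩
  · exact h_iso _ _ (Submodule.equivMapOfInjective ψ hψ S0) hSC

/-- Transfinite chain construction: from a one-step extension property to a full filtration. -/
lemma exists_chain {M : Type u} [AddCommGroup M] [Module A M]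
    (Q : Submodule A M → Submodule A M → Prop)
    (hstep : ∀ N : Submodule A M, N ≠ ⊤ → ∃ N' : Submodule A M, N < N' ∧ Q N N') :
    ∃ (μ : Ordinal.{u}) (F : Ordinal.{u} → Submodule A M), Monotone F ∧ F 0 = ⊥ ∧ F μ = ⊤ ∧
      (∀ ν : Ordinal.{u}, Order.IsSuccLimit ν → F ν = ⨆ (l : Ordinal.{u}) (_ : l < ν), F l) ∧
      (∀ l < μ, Q (F l) (F (l + 1))) := by
  classical
  choose step hlt hQ using hstep
  let stepT : Submodule A M → Submodule A M := fun N => if h : N = ⊤ then ⊤ else step N h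
  have hle : ∀ N, N ≤ stepT N := by
    intro N
    by_cases h : N = ⊤
    · subst h; simp [stepT]
    · exact le_of_lt (by simpa [stepT, dif_neg h] using hlt N h)
  let F : Ordinal.{u} → Submodule A M := fun o =>
    Ordinal.limitRecOn o ⊥ (fun _ N => stepT N) fun o _ ih => ⨆ l, ⨆ h : l < o, ih l h
  have F0 : F 0 = ⊥ := Ordinal.limitRecOn_zero _ _ _
  have Fs : ∀ o, F (Order.succ o) = stepT (F o) := fun o => Ordinal.limitRecOn_succ _ _ _ _
  have Fl : ∀ o, Order.IsSuccLimit o → F o = ⨆ l, ⨆ _ : l < o, F l := fun o h =>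
    Ordinal.limitRecOn_limit _ _ _ _ h
  have Fmono : Monotone F := by
    have key : ∀ b a : Ordinal.{u}, a ≤ b → F a ≤ F b := by
      intro b
      induction b using Ordinal.limitRecOn with
      | zero =>
        intro a ha
        rw [nonpos_iff_eq_zero.1 ha]
      | add_one o ih =>
        intro a ha
        rw [Ordinal.add_one_eq_succ] at ha ⊢
        rcases ha.lt_or_eq with h | rfl
        · exact (ih a (Order.lt_succ_iff.1 h)).trans ((hle (F o)).trans_eq (Fs o).symm)
        · exact le_rfl
      | limit o ho ih =>
        intro a ha
        rcases ha.lt_or_eq with h | rfl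
        · rw [Fl o ho]
          exact le_iSup₂ (f := fun (l : Ordinal.{u}) (_ : l < o) => F l) a h
        · exact le_rfl
    exact fun a b h => key b a h
  have htop : ∃ o : Ordinal.{u}, F o = ⊤ := by
    by_contra hc
    push_neg at hc
    have hstrict : ∀ o : Ordinal.{u}, ∃ x : M, x ∈ F (Order.succ o) ∧ x ∉ F o := by
      intro o
      have h1 : F o < F (Order.succ o) := by
        rw [Fs o]
        simpa [stepT, dif_neg (hc o)] using hlt (F o) (hc o)
      obtain ⟨x, hx1, hx2⟩ := SetLike.exists_of_lt h1
      exact ⟨x, hx1, hx2⟩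
    choose x hx1 hx2 using hstrict
    have hxinj : Function.Injective x := by
      intro o1 o2 h
      by_contra hne
      rcases Ne.lt_or_gt hne with hlt' | hlt'
      · exact hx2 o2 (h ▸ Fmono (Order.succ_le_of_lt hlt') (hx1 o1))
      · exact hx2 o1 (h.symm ▸ Fmono (Order.succ_le_of_lt hlt') (hx1 o2))
    letI wo : IsWellOrder (Order.succ (Cardinal.mk M)).ord.ToType (· < ·) := isWellOrder_lt
    have hcard := Cardinal.mk_le_of_injective
      (f := fun i : (Order.succ (Cardinal.mk M)).ord.ToType =>
        x ((@Ordinal.typein _ (· < ·) wo).toRelEmbedding i))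
      (hxinj.comp (Ordinal.typein_injective _))
    rw [Cardinal.mk_ord_toType] at hcard
    exact (Order.lt_succ (Cardinal.mk M)).not_ge hcard
  obtain ⟨o0, ho0⟩ := htop
  have hmem : F (sInf {o : Ordinal.{u} | F o = ⊤}) = ⊤ :=
    csInf_mem (s := {o : Ordinal.{u} | F o = ⊤}) ⟨o0, ho0⟩
  refine ⟨sInf {o : Ordinal.{u} | F o = ⊤}, F, Fmono, F0, hmem,
    fun ν hν => Fl ν hν, ?_⟩
  intro l hl
  have hFl : F l ≠ ⊤ := fun e =>
    absurd hl (not_lt.2 (csInf_le (OrderBot.bddBelow _) (Set.mem_setOf_eq ▸ e)))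
  have hstepeq : F (l + 1) = step (F l) hFl := by
    rw [Ordinal.add_one_eq_succ, Fs l]
    simp [stepT, dif_neg hFl]
  rw [hstepeq]
  exact hQ (F l) hFl

lemma pcl_to_filt {𝒞 : ModuleCat.{u} A → Prop} {M : ModuleCat.{u} A}
    (hP : Pcl 𝒞 M) : Filt 𝒞 M := by
  have hstep : ∀ N : Submodule A M, N ≠ ⊤ → ∃ N' : Submodule A M, N < N' ∧
      ∃ C : ModuleCat.{u} A, 𝒞 C ∧ Nonempty ((↥N' ⧸ N.comap N'.subtype) ≃ₗ[A] (C : Type u)) := by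
    intro N hN
    obtain ⟨S, hS0, hSC⟩ := hP N hN
    refine ⟨S.comap N.mkQ, ?_, ModuleCat.of A S, hSC, ⟨?_⟩⟩
    · refine lt_of_le_of_ne (fun x hx => ?_) (fun e => ?_)
      · have hx0 : N.mkQ x = 0 := by
          rw [Submodule.mkQ_apply]
          exact (Submodule.Quotient.mk_eq_zero N).2 hx
        show N.mkQ x ∈ S
        rw [hx0]; exact S.zero_mem
      · obtain ⟨y, hy, hy0⟩ := Submodule.ne_bot_iff _ |>.1 hS0
        obtain ⟨x, rfl⟩ := N.mkQ_surjective y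
        have hx : x ∈ S.comap N.mkQ := hy
        rw [← e] at hx
        apply hy0
        rw [Submodule.mkQ_apply]
        exact (Submodule.Quotient.mk_eq_zero N).2 hx
    · set N' := S.comap N.mkQ with hN'
      let ψ : (N' : Type u) →ₗ[A] ((M : Type u) ⧸ N) := N.mkQ.comp N'.subtype
      have hker : LinearMap.ker ψ = N.comap N'.subtype := by
        rw [LinearMap.ker_comp, Submodule.ker_mkQ]
      have hrange : LinearMap.range ψ = S := by
        rw [LinearMap.range_comp, Submodule.range_subtype, hN', Submodule.map_comap_eq,
          Submodule.range_mkQ, top_inf_eq]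
      exact (Submodule.quotEquivOfEq _ _ hker.symm).trans
        ((LinearMap.quotKerEquivRange ψ).trans (LinearEquiv.ofEq _ _ hrange))
  obtain ⟨μ, F, h1, h2, h3, h4, h5⟩ := exists_chain _ hstep
  exact ⟨μ, F, h1, h2, h3, fun ν _ hν => h4 ν hν, h5⟩

lemma filt_to_pcl {𝒞 : ModuleCat.{u} A → Prop} (h_iso : IsoClosed 𝒞)
    (h_quot : ClosedUnderQuotients 𝒞) {M : ModuleCat.{u} A} (h : Filt 𝒞 M) : Pcl 𝒞 M := by
  obtain ⟨μ, F, hmono, hF0, hFμ, hlim, hfac⟩ := h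
  intro N hN
  have hμmem : μ ∈ {o : Ordinal.{u} | ¬ F o ≤ N} := by
    simp only [Set.mem_setOf_eq, hFμ, top_le_iff]
    exact hN
  set lam := sInf {o : Ordinal.{u} | ¬ F o ≤ N} with hlamdef
  have hlam : ¬ F lam ≤ N := csInf_mem ⟨μ, hμmem⟩
  have hlamle : lam ≤ μ := csInf_le (OrderBot.bddBelow _) hμmem
  have hmin : ∀ o, o < lam → F o ≤ N := by
    intro o ho
    by_contra hc
    exact (notMem_of_lt_csInf ho (OrderBot.bddBelow _)) hc
  rcases Ordinal.zero_or_succ_or_isSuccLimit lam with h0 | ⟨l, hl⟩ | hlimit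
  · exact absurd (by rw [h0, hF0]; exact bot_le : F lam ≤ N) hlam
  · have hllam : l < lam := hl ▸ Order.lt_succ l
    have hlμ : l < μ := lt_of_lt_of_le hllam hlamle
    obtain ⟨C, hC, ⟨e⟩⟩ := hfac l hlμ
    have hFl : F l ≤ N := hmin l hllam
    have hFl1 : ¬ F (l + 1) ≤ N := by rw [Ordinal.add_one_eq_succ, hl]; exact hlam
    let ψ : (↥(F (l + 1)) : Type u) →ₗ[A] ((M : Type u) ⧸ N) := N.mkQ.comp (F (l + 1)).subtype
    have hker : (F l).comap (F (l + 1)).subtype ≤ LinearMap.ker ψ := by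
      rw [LinearMap.ker_comp, Submodule.ker_mkQ]
      exact Submodule.comap_mono hFl
    let φ := ((F l).comap (F (l + 1)).subtype).liftQ ψ hker
    refine ⟨LinearMap.range φ, ?_, ?_⟩
    · rw [Submodule.range_liftQ]
      intro hbot
      obtain ⟨x, hx1, hx2⟩ := SetLike.not_le_iff_exists.1 hFl1
      have hmem : ψ ⟨x, hx1⟩ ∈ LinearMap.range ψ := ⟨_, rfl⟩
      rw [hbot] at hmem
      have h0' : ψ ⟨x, hx1⟩ = 0 := (Submodule.mem_bot _).1 hmem
      apply hx2
      have : N.mkQ x = 0 := h0'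
      rw [Submodule.mkQ_apply] at this
      exact (Submodule.Quotient.mk_eq_zero N).1 this
    · have hD : 𝒞 (ModuleCat.of A (↥(F (l + 1)) ⧸ (F l).comap (F (l + 1)).subtype)) :=
        h_iso C _ e.symm hC
      exact h_quot _ _ φ.rangeRestrict φ.surjective_rangeRestrict hD
  · exfalso
    apply hlam
    rw [hlim lam hlamle hlimit]
    exact iSup_le fun o => iSup_le fun ho => hmin o ho

lemma pcl_quot {𝒞 : ModuleCat.{u} A → Prop} (h_iso : IsoClosed 𝒞)
    {Mm Nn : ModuleCat.{u} A} (f : (Mm : Type u) →ₗ[A] (Nn : Type u))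
    (hf : Function.Surjective f) (hM : Pcl 𝒞 Mm) : Pcl 𝒞 Nn := by
  intro K hK
  have hK' : Submodule.comap f K ≠ ⊤ := by
    intro e
    apply hK
    rw [← Submodule.map_comap_eq_of_surjective hf K, e, Submodule.map_top,
      LinearMap.range_eq_top.2 hf]
  have hker : Submodule.comap f K ≤ LinearMap.ker (K.mkQ.comp f) := by
    rw [LinearMap.ker_comp, Submodule.ker_mkQ]
  have hinj : Function.Injective ((Submodule.comap f K).liftQ (K.mkQ.comp f) hker) := by
    rw [← LinearMap.ker_eq_bot]
    apply Submodule.ker_liftQ_eq_bot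
    rw [LinearMap.ker_comp, Submodule.ker_mkQ]
  exact pcl_key h_iso hM _ hK' _ hinj

lemma pcl_ext {𝒞 : ModuleCat.{u} A → Prop} (h_iso : IsoClosed 𝒞)
    {X Y Z : ModuleCat.{u} A} (f : (X : Type u) →ₗ[A] (Y : Type u))
    (g : (Y : Type u) →ₗ[A] (Z : Type u))
    (hg : Function.Surjective g) (hfg : LinearMap.range f = LinearMap.ker g)
    (hX : Pcl 𝒞 X) (hZ : Pcl 𝒞 Z) : Pcl 𝒞 Y := by
  intro K hK
  by_cases hcase : LinearMap.ker g ≤ K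
  · -- kernel inside K : use Z
    have hsup : K ⊔ LinearMap.ker g = K := sup_eq_left.2 hcase
    have hmap : Submodule.map g K ≠ ⊤ := by
      intro e
      apply hK
      have hcm : Submodule.comap g (Submodule.map g K) = K ⊔ LinearMap.ker g :=
        Submodule.comap_map_eq g K
      rw [e, Submodule.comap_top, hsup] at hcm
      exact hcm.symm
    have hker : K ≤ LinearMap.ker (((Submodule.map g K).mkQ).comp g) := by
      rw [LinearMap.ker_comp, Submodule.ker_mkQ]
      exact Submodule.le_comap_map g K
    let φ := K.liftQ (((Submodule.map g K).mkQ).comp g) hker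
    have hinj : Function.Injective φ := by
      rw [← LinearMap.ker_eq_bot]
      apply Submodule.ker_liftQ_eq_bot
      rw [LinearMap.ker_comp, Submodule.ker_mkQ, Submodule.comap_map_eq, hsup]
    have hsurj : Function.Surjective φ := by
      rw [← LinearMap.range_eq_top, Submodule.range_liftQ, LinearMap.range_eq_top]
      exact (Submodule.mkQ_surjective _).comp hg
    let e' := LinearEquiv.ofBijective φ ⟨hinj, hsurj⟩
    exact pcl_key h_iso hZ _ hmap e'.symm.toLinearMap e'.symm.injective
  · -- kernel not inside K : use X
    have hK' : Submodule.comap f K ≠ ⊤ := by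
      intro e
      apply hcase
      rw [← hfg]
      rintro y ⟨x, rfl⟩
      have : x ∈ Submodule.comap f K := e ▸ Submodule.mem_top
      exact this
    have hker : Submodule.comap f K ≤ LinearMap.ker (K.mkQ.comp f) := by
      rw [LinearMap.ker_comp, Submodule.ker_mkQ]
    have hinj : Function.Injective ((Submodule.comap f K).liftQ (K.mkQ.comp f) hker) := by
      rw [← LinearMap.ker_eq_bot]
      apply Submodule.ker_liftQ_eq_bot
      rw [LinearMap.ker_comp, Submodule.ker_mkQ]
    exact pcl_key h_iso hX _ hK' _ hinj

lemma pcl_sum {𝒞 : ModuleCat.{u} A → Prop} (h_iso : IsoClosed 𝒞)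
    (ι : Type u) (Mf : ι → ModuleCat.{u} A) (h : ∀ i, Pcl 𝒞 (Mf i)) :
    Pcl 𝒞 (ModuleCat.of A (⨁ i, (Mf i : Type u))) := by
  classical
  intro K hK
  have hex : ∃ i, Submodule.comap (DirectSum.lof A ι (fun i => (Mf i : Type u)) i) K ≠ ⊤ := by
    by_contra hc
    push_neg at hc
    apply hK
    rw [eq_top_iff]
    rintro x -
    induction x using DirectSum.induction_on with
    | zero => exact K.zero_mem
    | of i m =>
      have hm : m ∈ Submodule.comap (DirectSum.lof A ι (fun i => (Mf i : Type u)) i) K :=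
        (hc i) ▸ Submodule.mem_top
      simpa [DirectSum.lof_eq_of] using hm
    | add x y hx hy => exact K.add_mem hx hy
  obtain ⟨i, hKi⟩ := hex
  have hker : Submodule.comap (DirectSum.lof A ι (fun i => (Mf i : Type u)) i) K ≤
      LinearMap.ker (K.mkQ.comp (DirectSum.lof A ι (fun i => (Mf i : Type u)) i)) := by
    rw [LinearMap.ker_comp, Submodule.ker_mkQ]
  have hinj : Function.Injective
      ((Submodule.comap (DirectSum.lof A ι (fun i => (Mf i : Type u)) i) K).liftQ
        (K.mkQ.comp (DirectSum.lof A ι (fun i => (Mf i : Type u)) i)) hker) := by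
    rw [← LinearMap.ker_eq_bot]
    apply Submodule.ker_liftQ_eq_bot
    rw [LinearMap.ker_comp, Submodule.ker_mkQ]
  exact pcl_key h_iso (h i) _ hKi _ hinj

end TorsionProof



/-- If `𝒞` is closed under isomorphisms, arbitrary direct sums and quotient
modules, then `Filt 𝒞` is a torsion class in Mod-A. -/
theorem stmt0 {A : Type u} [Ring A] (𝒞 : ModuleCat.{u} A → Prop)
    (h_iso : IsoClosed 𝒞) (h_sum : ClosedUnderDirectSums 𝒞)
    (h_quot : ClosedUnderQuotients 𝒞) :
    IsTorsionClass (Filt 𝒞) := by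
  refine ⟨?_, ?_, ?_, ?_⟩
  · intro M N e hM
    exact pcl_to_filt (pcl_quot h_iso e.toLinearMap e.surjective (filt_to_pcl h_iso h_quot hM))
  · intro M N f hf hM
    exact pcl_to_filt (pcl_quot h_iso f hf (filt_to_pcl h_iso h_quot hM))
  · intro X Y Z f g hf hg hfg hX hZ
    exact pcl_to_filt (pcl_ext h_iso f g hg hfg
      (filt_to_pcl h_iso h_quot hX) (filt_to_pcl h_iso h_quot hZ))
  · intro ι Mf hMf
    exact pcl_to_filt (pcl_sum h_iso ι Mf fun i => filt_to_pcl h_iso h_quot (hMf i))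
end

section
/- Let A be a ring and let 𝒞 be any class of right A-modules. Then FiltGen 𝒞 := Filt(Gen 𝒞) is the smallest torsion class in Mod-A containing 𝒞: it is a torsion class, it contains 𝒞, and every torsion class of right A-modules containing 𝒞 contains FiltGen 𝒞. -/
universe u

open DirectSum

section AuxTor

variable {A : Type u} [Ring A]

/-- Auxiliary class: modules all of whose nonzero quotients receive a nonzero map
from a module in `𝒞`. This will turn out to equal `FiltGen 𝒞`. -/
def Sc (𝒞 : ModuleCat.{u} A → Prop) : ModuleCat.{u} A → Prop :=
  fun M => ∀ N : Submodule A M, N ≠ ⊤ →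
    ∃ C : ModuleCat.{u} A, 𝒞 C ∧ ∃ f : (C : Type u) →ₗ[A] ((M : Type u) ⧸ N), f ≠ 0

lemma exists_not_mem' {M : Type u} [AddCommGroup M] [Module A M] {K : Submodule A M}
    (h : K ≠ ⊤) : ∃ y, y ∉ K := by
  by_contra h'
  push_neg at h'
  exact h (Submodule.eq_top_iff'.mpr h')

lemma Sc.push {𝒞 : ModuleCat.{u} A → Prop} {M : ModuleCat.{u} A} {Q : Type u}
    [AddCommGroup Q] [Module A Q] (hM : Sc 𝒞 M) (g : (M : Type u) →ₗ[A] Q) (hg : g ≠ 0) :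
    ∃ C : ModuleCat.{u} A, 𝒞 C ∧ ∃ f : (C : Type u) →ₗ[A] Q, f ≠ 0 := by
  have hker : LinearMap.ker g ≠ ⊤ := by
    intro h
    apply hg
    ext x
    have hx : x ∈ LinearMap.ker g := h.symm ▸ Submodule.mem_top
    simpa using hx
  obtain ⟨C, hC, h, hh⟩ := hM _ hker
  have hinj : Function.Injective ((LinearMap.ker g).liftQ g le_rfl) := by
    rw [← LinearMap.ker_eq_bot]
    exact Submodule.ker_liftQ_eq_bot _ _ _ le_rfl
  refine ⟨C, hC, ((LinearMap.ker g).liftQ g le_rfl).comp h, ?_⟩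
  intro h0
  apply hh
  ext c
  have h1 : ((LinearMap.ker g).liftQ g le_rfl) (h c) = 0 := by
    rw [← LinearMap.comp_apply, h0, LinearMap.zero_apply]
  have h2 := hinj (a₁ := h c) (a₂ := 0) (by simpa using h1)
  simpa using h2

end AuxTor
section AuxTor2

variable {A : Type u} [Ring A] (𝒞 : ModuleCat.{u} A → Prop)

lemma Sc.isoClosed : IsoClosed (Sc 𝒞) := by
  intro M N e hM K hK
  obtain ⟨y, hy⟩ := exists_not_mem' hK
  apply hM.push (K.mkQ.comp (e : (M : Type u) →ₗ[A] (N : Type u)))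
  intro h0
  apply hy
  have h1 := congrFun (congrArg DFunLike.coe h0) (e.symm y)
  simpa [Submodule.Quotient.mk_eq_zero] using h1

lemma Sc.quotClosed : ClosedUnderQuotients (Sc 𝒞) := by
  intro M N p hp hM K hK
  obtain ⟨y, hy⟩ := exists_not_mem' hK
  obtain ⟨x, rfl⟩ := hp y
  apply hM.push (K.mkQ.comp p)
  intro h0
  apply hy
  have h1 := congrFun (congrArg DFunLike.coe h0) x
  simpa [Submodule.Quotient.mk_eq_zero] using h1

lemma Sc.extClosed : ClosedUnderExtensions (Sc 𝒞) := by
  intro X Y Z f g hf hg hfg hX hZ N hN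
  by_cases hr : ∀ x : (X : Type u), f x ∈ N
  · -- the image of X lies in N : use Z
    set K : Submodule A (Z : Type u) := Submodule.map g N with hKdef
    have hK : K ≠ ⊤ := by
      intro htop
      apply hN
      rw [eq_top_iff]
      intro y _
      have hgy : g y ∈ K := htop.symm ▸ Submodule.mem_top
      obtain ⟨n, hn, hgn⟩ := hgy
      have h1 : n - y ∈ LinearMap.ker g := by
        simp [LinearMap.mem_ker, map_sub, hgn]
      have h2 : n - y ∈ LinearMap.range f := hfg.symm ▸ h1
      obtain ⟨x, hx⟩ := h2
      have h3 : n - y ∈ N := hx ▸ hr x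
      have := N.sub_mem hn h3
      simpa using this
    obtain ⟨C, hC, h, hh⟩ := hZ K hK
    have hle : N ≤ Submodule.comap g K := fun y hy => Submodule.mem_map_of_mem hy
    set ψ : ((Y : Type u) ⧸ N) →ₗ[A] ((Z : Type u) ⧸ K) := Submodule.mapQ N K g hle with hψ
    have hsurj : Function.Surjective ψ := by
      intro z
      obtain ⟨z', rfl⟩ := K.mkQ_surjective z
      obtain ⟨y, rfl⟩ := hg z'
      exact ⟨N.mkQ y, by simp [hψ, Submodule.mapQ_apply]⟩
    have hinj : Function.Injective ψ := by
      rw [← LinearMap.ker_eq_bot]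
      rw [eq_bot_iff]
      intro a ha
      obtain ⟨y, rfl⟩ := N.mkQ_surjective a
      simp only [LinearMap.mem_ker, hψ, Submodule.mkQ_apply, Submodule.mapQ_apply,
        Submodule.Quotient.mk_eq_zero] at ha
      obtain ⟨n, hn, hgn⟩ := ha
      have h1 : n - y ∈ LinearMap.ker g := by simp [LinearMap.mem_ker, map_sub, hgn]
      obtain ⟨x, hx⟩ := hfg.symm ▸ h1
      have h3 : n - y ∈ N := hx ▸ hr x
      have h4 : y ∈ N := by simpa using N.sub_mem hn h3
      simpa [Submodule.mem_bot, Submodule.Quotient.mk_eq_zero] using h4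
    let eψ : ((Y : Type u) ⧸ N) ≃ₗ[A] ((Z : Type u) ⧸ K) :=
      LinearEquiv.ofBijective ψ ⟨hinj, hsurj⟩
    refine ⟨C, hC, (eψ.symm : ((Z : Type u) ⧸ K) →ₗ[A] ((Y : Type u) ⧸ N)).comp h, ?_⟩
    intro h0
    apply hh
    ext c
    have h1 := congrFun (congrArg DFunLike.coe h0) c
    simp only [LinearMap.comp_apply, LinearMap.zero_apply, LinearEquiv.coe_coe] at h1 ⊢
    have := congrArg eψ h1
    simpa using this
  · push_neg at hr
    obtain ⟨x, hx⟩ := hr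
    apply hX.push (N.mkQ.comp f)
    intro h0
    apply hx
    have h1 := congrFun (congrArg DFunLike.coe h0) x
    simpa [Submodule.Quotient.mk_eq_zero] using h1

lemma Sc.sumClosed : ClosedUnderDirectSums (Sc 𝒞) := by
  classical
  intro ι Ms hMs N hN
  have hex : ∃ (i : ι) (x : (Ms i : Type u)),
      (DirectSum.of (fun i => (Ms i : Type u)) i) x ∉ N := by
    by_contra h'
    push_neg at h'
    apply hN
    rw [eq_top_iff]
    intro z hz
    clear hz
    induction z using DirectSum.induction_on with
    | zero => exact N.zero_mem
    | of i x => exact h' i x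
    | add x y hx hy => exact N.add_mem hx hy
  obtain ⟨i, x, hx⟩ := hex
  apply (hMs i).push (N.mkQ.comp (DirectSum.lof A ι (fun i => (Ms i : Type u)) i))
  intro h0
  apply hx
  have h1 := congrFun (congrArg DFunLike.coe h0) x
  rw [← DirectSum.lof_eq_of A]
  simpa [Submodule.Quotient.mk_eq_zero] using h1

lemma Sc.isTorsionClass : IsTorsionClass (Sc 𝒞) :=
  ⟨Sc.isoClosed 𝒞, Sc.quotClosed 𝒞, Sc.extClosed 𝒞, Sc.sumClosed 𝒞⟩

lemma subset_Sc : ∀ M, 𝒞 M → Sc 𝒞 M := by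
  intro M hM K hK
  obtain ⟨y, hy⟩ := exists_not_mem' hK
  refine ⟨M, hM, K.mkQ, ?_⟩
  intro h0
  apply hy
  have h1 := congrFun (congrArg DFunLike.coe h0) y
  simpa [Submodule.Quotient.mk_eq_zero] using h1

end AuxTor2
section AuxGen

variable {A : Type u} [Ring A] {𝒞 : ModuleCat.{u} A → Prop}

lemma gen_of_surjective {C X : ModuleCat.{u} A} (hC : 𝒞 C)
    (g : (C : Type u) →ₗ[A] (X : Type u)) (hg : Function.Surjective g) : Gen 𝒞 X := by
  classical
  refine ⟨PUnit.{u + 1}, fun _ => C,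
    g.comp (DirectSum.toModule A PUnit.{u + 1} _ fun _ => LinearMap.id), fun _ => hC, ?_⟩
  intro x
  obtain ⟨c, hc⟩ := hg x
  refine ⟨DirectSum.lof A PUnit.{u + 1} _ PUnit.unit c, ?_⟩
  simp [DirectSum.toModule_lof, hc]

lemma gen_zero (X : ModuleCat.{u} A) (hX : Subsingleton (X : Type u)) : Gen 𝒞 X := by
  refine ⟨PEmpty.{u + 1}, fun i => i.elim, 0, fun i => i.elim, ?_⟩
  intro x
  exact ⟨0, Subsingleton.elim _ _⟩

end AuxGen
section AuxFilt

variable {A : Type u} [Ring A]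

lemma Sc_subset_FiltGen (𝒞 : ModuleCat.{u} A → Prop) :
    ∀ M : ModuleCat.{u} A, Sc 𝒞 M → FiltGen 𝒞 M := by
  classical
  intro M hM
  -- one step of the construction: adjoin the image of a nonzero map from `𝒞`
  let step : Submodule A (M : Type u) → Submodule A (M : Type u) := fun N =>
    if h : N = ⊤ then ⊤
    else Submodule.comap N.mkQ (LinearMap.range (hM N h).choose_spec.2.choose)
  have step_le : ∀ N, N ≤ step N := by
    intro N x hx
    by_cases h : N = ⊤
    · simp [step, h]
    · simp only [step, dif_neg h, Submodule.mem_comap]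
      have h0 : N.mkQ x = 0 := by
        simpa [Submodule.Quotient.mk_eq_zero] using hx
      rw [h0]
      exact Submodule.zero_mem _
  have step_top : step ⊤ = ⊤ := by simp [step]
  have step_ne : ∀ N, N ≠ ⊤ → N < step N := by
    intro N h
    refine lt_of_le_of_ne (step_le N) ?_
    intro heq
    set f := (hM N h).choose_spec.2.choose with hfdef
    have hf : f ≠ 0 := (hM N h).choose_spec.2.choose_spec
    obtain ⟨c, hc⟩ : ∃ c, f c ≠ 0 := by
      by_contra h'
      push_neg at h'
      exact hf (by ext c; simpa using h' c)
    obtain ⟨y, hy⟩ := N.mkQ_surjective (f c)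
    have hy1 : y ∈ step N := by
      simp only [step, dif_neg h, Submodule.mem_comap]
      exact ⟨c, hy.symm⟩
    have hy2 : y ∈ N := heq ▸ hy1
    apply hc
    rw [← hy]
    simpa [Submodule.Quotient.mk_eq_zero] using hy2
  -- the transfinite filtration
  let F : Ordinal.{u} → Submodule A (M : Type u) := fun o =>
    Ordinal.limitRecOn o ⊥ (fun _ ih => step ih)
      (fun o _ ih => ⨆ (l : Ordinal.{u}), ⨆ h : l < o, ih l h)
  have F0 : F 0 = ⊥ := Ordinal.limitRecOn_zero _ _ _
  have Fsucc : ∀ o, F (Order.succ o) = step (F o) := fun o => Ordinal.limitRecOn_succ _ _ _ _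
  have Flim : ∀ o, Order.IsSuccLimit o → F o = ⨆ (l : Ordinal.{u}), ⨆ _ : l < o, F l := by
    intro o ho
    exact Ordinal.limitRecOn_limit _ _ _ _ ho
  have Fmono : Monotone F := by
    intro a b hab
    induction b using Ordinal.induction with
    | h b ih =>
      rcases Ordinal.zero_or_succ_or_isSuccLimit b with hb | ⟨c, rfl⟩ | hb
      · subst hb
        rw [nonpos_iff_eq_zero] at hab
        subst hab
        exact le_rfl
      · rcases eq_or_lt_of_le hab with rfl | hlt
        · exact le_rfl
        · have hac : a ≤ c := Order.lt_succ_iff.mp hlt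
          calc F a ≤ F c := ih c (Order.lt_succ c) hac
          _ ≤ step (F c) := step_le _
          _ = F (Order.succ c) := (Fsucc c).symm
      · rcases eq_or_lt_of_le hab with rfl | hlt
        · exact le_rfl
        · rw [Flim b hb]
          exact le_iSup_of_le a (le_iSup_of_le hlt le_rfl)
  have hex : ∃ o, F o = ⊤ := by
    by_contra h'
    push_neg at h'
    have hstrict : StrictMono F := by
      intro a b hab
      have h1 : F a < F (Order.succ a) := by
        rw [Fsucc]
        exact step_ne _ (h' a)
      exact lt_of_lt_of_le h1 (Fmono (Order.succ_le_of_lt hab))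
    exact not_small_ordinal.{u} (small_of_injective hstrict.injective)
  refine ⟨hex.choose, F, Fmono, F0, hex.choose_spec, ?_, ?_⟩
  · intro ν _ hν
    exact Flim ν hν
  · intro l _
    by_cases h : F l = ⊤
    · have hsub : Subsingleton ((↥(F (l + 1)) : Type u) ⧸ (F l).comap (F (l + 1)).subtype) := by
        apply Submodule.Quotient.subsingleton_iff.mpr
        rw [eq_top_iff]
        intro x _
        have : (x : (M : Type u)) ∈ F l := h.symm ▸ Submodule.mem_top
        exact this
      haveI := hsub
      exact ⟨ModuleCat.of A PUnit.{u + 1}, gen_zero _ inferInstance,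
        ⟨LinearEquiv.ofSubsingleton _ _⟩⟩
    · set f := (hM (F l) h).choose_spec.2.choose with hfdef
      have hC : 𝒞 (hM (F l) h).choose := (hM (F l) h).choose_spec.1
      have hFl1 : F (l + 1) = Submodule.comap (F l).mkQ (LinearMap.range f) := by
        rw [Ordinal.add_one_eq_succ, Fsucc]
        simp only [step, dif_neg h]
        rfl
      let φ : (↥(F (l + 1)) : Type u) →ₗ[A] ((M : Type u) ⧸ F l) :=
        ((F l).mkQ).comp (F (l + 1)).subtype
      have hker : LinearMap.ker φ = (F l).comap (F (l + 1)).subtype := by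
        ext x
        simp [φ, LinearMap.mem_ker, Submodule.Quotient.mk_eq_zero]
      have hrange : LinearMap.range φ = LinearMap.range f := by
        ext z
        constructor
        · rintro ⟨⟨y, hy⟩, rfl⟩
          rw [hFl1] at hy
          exact hy
        · intro hz
          obtain ⟨y, hy⟩ := (F l).mkQ_surjective z
          have hy1 : y ∈ F (l + 1) := by
            rw [hFl1, Submodule.mem_comap, hy]
            exact hz
          exact ⟨⟨y, hy1⟩, hy⟩
      refine ⟨ModuleCat.of A ↥(LinearMap.range f), ?_, ?_⟩
      · exact gen_of_surjective hC f.rangeRestrict f.surjective_rangeRestrict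
      · exact ⟨(Submodule.quotEquivOfEq _ _ hker.symm).trans
          (φ.quotKerEquivRange.trans (LinearEquiv.ofEq _ _ hrange))⟩

end AuxFilt
section AuxMin

variable {A : Type u} [Ring A]

lemma FiltGen_subset_torsion (𝒞 𝒯 : ModuleCat.{u} A → Prop) (h𝒯 : IsTorsionClass 𝒯)
    (hsub : ∀ M, 𝒞 M → 𝒯 M) : ∀ M, FiltGen 𝒞 M → 𝒯 M := by
  classical
  obtain ⟨hiso, hquot, hext, hsum⟩ := h𝒯
  have hgen : ∀ M, Gen 𝒞 M → 𝒯 M := by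
    rintro M ⟨ι, Ms, f, hMs, hf⟩
    exact hquot (ModuleCat.of A (⨁ i, (Ms i : Type u))) M f hf
      (hsum ι Ms fun i => hsub _ (hMs i))
  have hzero : ∀ X : ModuleCat.{u} A, Subsingleton (X : Type u) → 𝒯 X := by
    intro X hX
    haveI : Subsingleton (⨁ (i : PEmpty.{u + 1}), ((PEmpty.elim i : ModuleCat.{u} A) : Type u)) :=
      ⟨fun a b => DFinsupp.ext fun i => i.elim⟩
    have h0 : 𝒯 (ModuleCat.of A
        (⨁ (i : PEmpty.{u + 1}), ((PEmpty.elim i : ModuleCat.{u} A) : Type u))) :=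
      hsum _ _ fun i => i.elim
    exact hiso _ X (LinearEquiv.ofSubsingleton _ _) h0
  rintro M ⟨μ, F, hmono, hF0, hFμ, hlim, hfac⟩
  suffices h : ∀ l ≤ μ, 𝒯 (ModuleCat.of A ↥(F l)) by
    have hμ := h μ le_rfl
    exact hiso _ M ((LinearEquiv.ofEq (F μ) ⊤ hFμ).trans (Submodule.topEquiv)) hμ
  intro l
  induction l using Ordinal.induction with
  | h l ih =>
    intro hlμ
    rcases Ordinal.zero_or_succ_or_isSuccLimit l with h0 | ⟨c, rfl⟩ | hl
    · subst h0
      apply hzero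
      have : Subsingleton ↥(F 0) := by rw [hF0]; infer_instance
      exact this
    · rw [← Ordinal.add_one_eq_succ] at hlμ ⊢
      have hc : c < μ := lt_of_lt_of_le (by rw [Ordinal.add_one_eq_succ]; exact Order.lt_succ c) hlμ
      obtain ⟨C', hC', ⟨e⟩⟩ := hfac c hc
      have hTq : 𝒯 (ModuleCat.of A ((↥(F (c + 1)) : Type u) ⧸ (F c).comap (F (c + 1)).subtype)) :=
        hiso C' _ e.symm (hgen C' hC')
      have hTc : 𝒯 (ModuleCat.of A ↥(F c)) :=
        ih c (by rw [← Ordinal.add_one_eq_succ] at *; exact Order.lt_succ c) hc.le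
      have hle : F c ≤ F (c + 1) := hmono (le_of_lt (by
        rw [Ordinal.add_one_eq_succ]; exact Order.lt_succ c))
      refine hext (ModuleCat.of A ↥(F c)) (ModuleCat.of A ↥(F (c + 1)))
        (ModuleCat.of A ((↥(F (c + 1)) : Type u) ⧸ (F c).comap (F (c + 1)).subtype))
        (Submodule.inclusion hle) ((F c).comap (F (c + 1)).subtype).mkQ
        (Submodule.inclusion_injective hle) (Submodule.mkQ_surjective _) ?_ hTc hTq
      rw [Submodule.ker_mkQ, Submodule.range_inclusion]
    · have hν := hlim l hlμ hl
      have hne : (0 : Ordinal.{u}) < l := hl.pos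
      set idx : l.ToType → Ordinal.{u} := fun i => ((Ordinal.ToType.mk (o := l)).symm i : Ordinal.{u})
        with hidxdef
      have hidx : ∀ i, idx i < l := fun i => ((Ordinal.ToType.mk (o := l)).symm i).2
      set Ms : l.ToType → ModuleCat.{u} A := fun i => ModuleCat.of A ↥(F (idx i)) with hMsdef
      have hMsT : ∀ i, 𝒯 (Ms i) := fun i =>
        ih _ (hidx i) (le_of_lt (lt_of_lt_of_le (hidx i) hlμ))
      have hsumT : 𝒯 (ModuleCat.of A (⨁ i, (Ms i : Type u))) := hsum _ Ms hMsT
      let g : (⨁ i, (Ms i : Type u)) →ₗ[A] ↥(F l) :=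
        DirectSum.toModule A l.ToType _ fun i => Submodule.inclusion (hmono (hidx i).le)
      have hg : Function.Surjective g := by
        intro x
        have hx : (x : (M : Type u)) ∈ ⨆ (o : Ordinal.{u}), ⨆ _ : o < l, F o := by
          rw [← hν]; exact x.2
        rw [iSup_subtype'] at hx
        haveI : Nonempty {o : Ordinal.{u} // o < l} := ⟨⟨0, hne⟩⟩
        have hdir : Directed (· ≤ ·) fun o : {o : Ordinal.{u} // o < l} => F o.1 := by
          intro a b
          rcases le_total a.1 b.1 with hab | hab
          · exact ⟨b, hmono hab, le_rfl⟩
          · exact ⟨a, le_rfl, hmono hab⟩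
        obtain ⟨⟨o, ho⟩, hmem⟩ := (Submodule.mem_iSup_of_directed _ hdir).1 hx
        have hoeq : idx (Ordinal.ToType.mk (o := l) ⟨o, ho⟩) = o := by
          simp [hidxdef]
        refine ⟨DirectSum.lof A l.ToType (fun i => (Ms i : Type u))
          (Ordinal.ToType.mk (o := l) ⟨o, ho⟩) ⟨(x : (M : Type u)), by rw [hoeq]; exact hmem⟩, ?_⟩
        apply Subtype.ext
        simp only [g, DirectSum.toModule_lof]
        rfl
      exact hquot (ModuleCat.of A (⨁ i, (Ms i : Type u))) (ModuleCat.of A ↥(F l)) g hg hsumT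

end AuxMin
/-- `FiltGen 𝒞` is the smallest torsion class in Mod-A containing `𝒞`. -/
theorem stmt1 {A : Type u} [Ring A] (𝒞 : ModuleCat.{u} A → Prop) :
    IsTorsionClass (FiltGen 𝒞) ∧ (∀ M, 𝒞 M → FiltGen 𝒞 M) ∧
      ∀ 𝒯 : ModuleCat.{u} A → Prop, IsTorsionClass 𝒯 → (∀ M, 𝒞 M → 𝒯 M) →
        ∀ M, FiltGen 𝒞 M → 𝒯 M := by
  have heq : FiltGen 𝒞 = Sc 𝒞 := by
    funext M
    apply propext
    exact ⟨fun h => FiltGen_subset_torsion 𝒞 (Sc 𝒞) (Sc.isTorsionClass 𝒞) (subset_Sc 𝒞) M h,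
      fun h => Sc_subset_FiltGen 𝒞 M h⟩
  refine ⟨heq ▸ Sc.isTorsionClass 𝒞, ?_, fun 𝒯 h𝒯 hsub => FiltGen_subset_torsion 𝒞 𝒯 h𝒯 hsub⟩
  intro M hM
  exact Sc_subset_FiltGen 𝒞 M (subset_Sc 𝒞 M hM)
end

section
/- Let A be a ring and let 𝒞 be a class of right A-modules, closed under isomorphisms, that is closed under kernels and cokernels of homomorphisms between modules in 𝒞, under arbitrary direct sums, and under extensions. Then 𝒞 is closed under submodules inside FiltGen 𝒞: if C is a module in 𝒞 and Y is a submodule of C with Y ∈ FiltGen 𝒞, then Y ∈ 𝒞. -/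
universe u

open DirectSum

/-- If `𝒞` is closed under isomorphisms, kernels, cokernels, direct sums and
extensions, then `𝒞` is closed under submodules inside `FiltGen 𝒞`. -/
theorem stmt2 {A : Type u} [Ring A] (𝒞 : ModuleCat.{u} A → Prop)
    (h_iso : IsoClosed 𝒞) (h_ker : ClosedUnderKernels 𝒞) (h_coker : ClosedUnderCokernels 𝒞)
    (h_sum : ClosedUnderDirectSums 𝒞) (h_ext : ClosedUnderExtensions 𝒞)
    (C : ModuleCat.{u} A) (hC : 𝒞 C) (Y : Submodule A C)
    (hY : FiltGen 𝒞 (ModuleCat.of A Y)) :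
    𝒞 (ModuleCat.of A Y) := by
  -- zero modules are in 𝒞
  have hzero : ∀ (M : ModuleCat.{u} A), Subsingleton (M : Type u) → 𝒞 M := by
    intro M hM
    have h0 := h_sum PEmpty (fun i => i.elim) (fun i => i.elim)
    have hss : Subsingleton (⨁ i : PEmpty.{u+1}, ((i.elim : ModuleCat.{u} A) : Type u)) :=
      ⟨fun a b => DFinsupp.ext fun i => i.elim⟩
    exact h_iso _ M
      { toFun := fun _ => (0 : M)
        map_add' := by intros; simp
        map_smul' := by intros; simp
        invFun := fun _ => 0
        left_inv := fun x => Subsingleton.elim _ _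
        right_inv := fun x => Subsingleton.elim _ _ } h0
  -- images of maps into C from modules of 𝒞 are in 𝒞
  have himg : ∀ (M : ModuleCat.{u} A) (f : M →ₗ[A] C), 𝒞 M →
      𝒞 (ModuleCat.of A (LinearMap.range f)) := by
    intro M f hM
    have hcok := h_coker M C f hM hC
    have hk := h_ker C (ModuleCat.of A ((C : Type u) ⧸ LinearMap.range f))
      (LinearMap.range f).mkQ hC hcok
    rwa [Submodule.ker_mkQ] at hk
  -- sups of families of 𝒞-submodules of C are in 𝒞
  have hsup : ∀ (ι : Type u) (g : ι → Submodule A C), (∀ i, 𝒞 (ModuleCat.of A (g i))) →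
      𝒞 (ModuleCat.of A (⨆ i, g i : Submodule A C)) := by
    intro ι g hg
    classical
    have hd := h_sum ι (fun i => ModuleCat.of A (g i)) hg
    have hi := himg (ModuleCat.of A (⨁ i, ((g i : Submodule A C) : Type u)))
      (DFinsupp.lsum ℕ fun i => (g i).subtype) hd
    rwa [← Submodule.iSup_eq_range_dfinsupp_lsum] at hi
  obtain ⟨μ, F, hmono, hF0, hFμ, hcont, hsucc⟩ := hY
  have main : ∀ o : Ordinal.{u}, o ≤ μ →
      𝒞 (ModuleCat.of A ((F o).map Y.subtype)) := by
    intro o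
    induction o using Ordinal.induction with
    | h o IH =>
      intro hoμ
      rcases Ordinal.zero_or_succ_or_isSuccLimit o with rfl | ⟨a, rfl⟩ | hlim
      · rw [hF0, Submodule.map_bot]
        exact hzero _ ⟨fun x y => Subtype.ext
          (((Submodule.mem_bot A).mp x.2).trans ((Submodule.mem_bot A).mp y.2).symm)⟩
      · -- successor step
        have haμ : a < μ := Order.succ_le_iff.mp hoμ
        rw [← Ordinal.add_one_eq_succ]
        obtain ⟨C', ⟨ι, M, gmap, hMi, hgsurj⟩, ⟨e⟩⟩ := hsucc a haμ
        have hle : F a ≤ F (a + 1) := hmono (by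
          rw [Ordinal.add_one_eq_succ]; exact Order.le_succ a)
        set K : Submodule A (F (a + 1)) := (F a).comap (F (a + 1)).subtype with hK
        set S : Type u := ⨁ i, (M i : Type u) with hS
        have hSC : 𝒞 (ModuleCat.of A S) := h_sum ι M hMi
        set g' : S →ₗ[A] (↥(F (a + 1)) ⧸ K) := e.symm.toLinearMap ∘ₗ gmap with hg'
        have hg'surj : Function.Surjective g' := e.symm.surjective.comp hgsurj
        set φ : (↥(F (a + 1)) × S) →ₗ[A] (↥(F (a + 1)) ⧸ K) :=
          K.mkQ ∘ₗ LinearMap.fst A (↥(F (a + 1))) S - g' ∘ₗ LinearMap.snd A (↥(F (a + 1))) S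
          with hφ
        set E : Submodule A (↥(F (a + 1)) × S) := LinearMap.ker φ with hEdef
        have hmem0 : ∀ c : ↥(F a),
            ((LinearMap.inl A (↥(F (a + 1))) S) ∘ₗ Submodule.inclusion hle) c ∈ E := by
          intro c
          simp only [hEdef, LinearMap.mem_ker, hφ, LinearMap.sub_apply, LinearMap.comp_apply,
            LinearMap.fst_apply, LinearMap.snd_apply, LinearMap.inl_apply, map_zero, sub_zero]
          rw [Submodule.mkQ_apply, Submodule.Quotient.mk_eq_zero]
          exact c.2
        set f : ↥(F a) →ₗ[A] ↥E :=
          LinearMap.codRestrict E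
            ((LinearMap.inl A (↥(F (a + 1))) S) ∘ₗ Submodule.inclusion hle) hmem0 with hf
        have finj : Function.Injective f := by
          intro c c' hcc'
          have h1 : ((f c : ↥(F (a + 1)) × S)).1 = ((f c' : ↥(F (a + 1)) × S)).1 := by
            rw [hcc']
          have h2 : Submodule.inclusion hle c = Submodule.inclusion hle c' := h1
          exact Submodule.inclusion_injective hle h2
        set gE : ↥E →ₗ[A] S := (LinearMap.snd A (↥(F (a + 1))) S) ∘ₗ E.subtype with hgE
        have gEsurj : Function.Surjective gE := by
          intro s
          obtain ⟨y, hy⟩ := Submodule.mkQ_surjective K (g' s)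
          refine ⟨⟨(y, s), ?_⟩, rfl⟩
          simp only [hEdef, LinearMap.mem_ker, hφ, LinearMap.sub_apply, LinearMap.comp_apply,
            LinearMap.fst_apply, LinearMap.snd_apply, hy, sub_self]
        have hrk : LinearMap.range f = LinearMap.ker gE := by
          apply le_antisymm
          · rintro _ ⟨c, rfl⟩
            show gE (f c) = 0
            rfl
          · rintro ⟨⟨p, s⟩, hps⟩ hz
            have hs0 : s = 0 := hz
            subst hs0
            have hp : p ∈ K := by
              have h3 := hps
              simp only [hEdef, LinearMap.mem_ker, hφ, LinearMap.sub_apply, LinearMap.comp_apply,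
                LinearMap.fst_apply, LinearMap.snd_apply, map_zero, sub_zero,
                Submodule.mkQ_apply, Submodule.Quotient.mk_eq_zero] at h3
              exact h3
            exact ⟨⟨(p : _), hp⟩, by
              apply Subtype.ext
              exact Prod.ext (Subtype.ext rfl) rfl⟩
        have hFa : 𝒞 (ModuleCat.of A (F a)) :=
          h_iso _ _ (Submodule.equivMapOfInjective Y.subtype Y.injective_subtype (F a)).symm
            (IH a (Order.lt_succ a) haμ.le)
        have hEC : 𝒞 (ModuleCat.of A E) :=
          h_ext (ModuleCat.of A (F a)) (ModuleCat.of A E) (ModuleCat.of A S) f gE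
            finj gEsurj hrk hFa hSC
        set fstE : ↥E →ₗ[A] ↥(F (a + 1)) :=
          (LinearMap.fst A (↥(F (a + 1))) S) ∘ₗ E.subtype with hfstE
        have fstEsurj : Function.Surjective fstE := by
          intro p
          obtain ⟨s, hs⟩ := hg'surj (K.mkQ p)
          refine ⟨⟨(p, s), ?_⟩, rfl⟩
          simp only [hEdef, LinearMap.mem_ker, hφ, LinearMap.sub_apply, LinearMap.comp_apply,
            LinearMap.fst_apply, LinearMap.snd_apply, hs, Submodule.mkQ_apply, sub_self]
        set hmap : ↥E →ₗ[A] C := Y.subtype ∘ₗ ((F (a + 1)).subtype ∘ₗ fstE) with hhmap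
        have hrange : LinearMap.range hmap = (F (a + 1)).map Y.subtype := by
          rw [hhmap, LinearMap.range_comp, LinearMap.range_comp,
            LinearMap.range_eq_top.mpr fstEsurj, Submodule.map_subtype_top]
        have hfin := himg (ModuleCat.of A E) hmap hEC
        rwa [hrange] at hfin
      · -- limit step
        have hFeq : F o = ⨆ l, ⨆ _ : l < o, F l := hcont o hoμ hlim
        have hmapeq : (F o).map Y.subtype =
            ⨆ x : o.ToType,
              (F ((Ordinal.ToType.mk (o := o)).symm x : Ordinal)).map Y.subtype := by
          rw [hFeq, Submodule.map_iSup]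
          simp_rw [Submodule.map_iSup]
          rw [iSup_subtype']
          exact ((Ordinal.ToType.mk (o := o)).symm.toEquiv.iSup_comp
            (g := fun l : {l : Ordinal // l < o} => (F (l : Ordinal)).map Y.subtype)).symm
        rw [hmapeq]
        exact hsup o.ToType _ fun x =>
          IH _ ((Ordinal.ToType.mk (o := o)).symm x).2
            (le_of_lt (lt_of_lt_of_le ((Ordinal.ToType.mk (o := o)).symm x).2 hoμ))
  have hμ := main μ le_rfl
  rw [hFμ, Submodule.map_subtype_top] at hμ
  exact hμ
end

section
/- Let A be a ring and let 𝒞 be a class of right A-modules, closed under isomorphisms, that is closed under kernels and cokernels of homomorphisms between modules in 𝒞, under arbitrary direct sums, and under extensions. Then 𝔞(FiltGen 𝒞) = 𝒞, where 𝔞(𝒯) := {X ∈ 𝒯 : for every homomorphism g : Y → X with Y ∈ 𝒯, Ker g ∈ 𝒯}. -/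
universe u

open DirectSum

section Aux

set_option linter.unusedSectionVars false

variable {A : Type u} [Ring A] {𝒞 : ModuleCat.{u} A → Prop}
variable (h_iso : IsoClosed 𝒞) (h_ker : ClosedUnderKernels 𝒞) (h_coker : ClosedUnderCokernels 𝒞)
variable (h_sum : ClosedUnderDirectSums 𝒞) (h_ext : ClosedUnderExtensions 𝒞)

include h_iso in
/-- transfer membership along a linear equivalence of underlying modules -/
lemma ciso {M N : Type u} [AddCommGroup M] [Module A M] [AddCommGroup N] [Module A N]
    (e : M ≃ₗ[A] N) (hM : 𝒞 (ModuleCat.of A M)) : 𝒞 (ModuleCat.of A N) :=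
  h_iso (ModuleCat.of A M) (ModuleCat.of A N) e hM

/-- linear equivalence between two subsingleton modules -/
def subsingletonLEquiv (M N : Type u) [AddCommGroup M] [Module A M] [AddCommGroup N]
    [Module A N] [Subsingleton M] [Subsingleton N] : M ≃ₗ[A] N where
  toFun := fun _ => 0
  invFun := fun _ => 0
  map_add' := fun _ _ => Subsingleton.elim _ _
  map_smul' := fun _ _ => Subsingleton.elim _ _
  left_inv := fun _ => Subsingleton.elim _ _
  right_inv := fun _ => Subsingleton.elim _ _

include h_iso h_sum in
/-- every subsingleton module belongs to `𝒞` -/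
lemma czero (M : Type u) [AddCommGroup M] [Module A M] [Subsingleton M] :
    𝒞 (ModuleCat.of A M) := by
  have h0 : 𝒞 (ModuleCat.of A (⨁ _ : PEmpty.{u+1}, (PUnit.{u+1} : Type u))) :=
    h_sum PEmpty.{u+1} (fun _ => ModuleCat.of A PUnit.{u+1}) (fun i => i.elim)
  have : Subsingleton (⨁ _ : PEmpty.{u+1}, (PUnit.{u+1} : Type u)) :=
    ⟨fun a b => DFinsupp.ext fun i => i.elim⟩
  exact ciso h_iso (subsingletonLEquiv _ _) h0

include h_iso h_ker h_coker in
/-- image of a map between members of `𝒞` is in `𝒞` -/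
lemma cim {M N : Type u} [AddCommGroup M] [Module A M] [AddCommGroup N] [Module A N]
    (f : M →ₗ[A] N) (hM : 𝒞 (ModuleCat.of A M)) (hN : 𝒞 (ModuleCat.of A N)) :
    𝒞 (ModuleCat.of A (LinearMap.range f)) := by
  have hk : 𝒞 (ModuleCat.of A (LinearMap.ker f)) :=
    h_ker (ModuleCat.of A M) (ModuleCat.of A N) f hM hN
  have hq := h_coker (ModuleCat.of A (LinearMap.ker f)) (ModuleCat.of A M)
    (LinearMap.ker f).subtype hk hM
  refine ciso h_iso ?_ hq
  exact (Submodule.quotEquivOfEq _ _ (Submodule.range_subtype _)).trans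
    (f.quotKerEquivRange)

include h_iso h_coker in
/-- quotient of a member of `𝒞` by a submodule in `𝒞` is in `𝒞` -/
lemma cquot {M : Type u} [AddCommGroup M] [Module A M] (p : Submodule A M)
    (hM : 𝒞 (ModuleCat.of A M)) (hp : 𝒞 (ModuleCat.of A p)) :
    𝒞 (ModuleCat.of A (M ⧸ p)) := by
  have hq := h_coker (ModuleCat.of A p) (ModuleCat.of A M) p.subtype hp hM
  refine ciso h_iso ?_ hq
  exact Submodule.quotEquivOfEq _ _ (Submodule.range_subtype _)

include h_iso h_coker h_ker in
/-- image of a map with kernel in `𝒞`, from a member of `𝒞` (no hypothesis on codomain) -/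
lemma cim' {M N : Type u} [AddCommGroup M] [Module A M] [AddCommGroup N] [Module A N]
    (f : M →ₗ[A] N) (hM : 𝒞 (ModuleCat.of A M)) (hk : 𝒞 (ModuleCat.of A (LinearMap.ker f))) :
    𝒞 (ModuleCat.of A (LinearMap.range f)) := by
  have hq : 𝒞 (ModuleCat.of A (M ⧸ LinearMap.ker f)) :=
    cquot h_iso h_coker _ hM hk
  exact ciso h_iso f.quotKerEquivRange hq

include h_iso h_ext in
/-- extension of submodules: if `p ≤ q`, `p ∈ 𝒞` and `q/p ∈ 𝒞` then `q ∈ 𝒞` -/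
lemma cext {M : Type u} [AddCommGroup M] [Module A M] {p q : Submodule A M} (hpq : p ≤ q)
    (hp : 𝒞 (ModuleCat.of A p))
    (hq : 𝒞 (ModuleCat.of A (q ⧸ p.comap q.subtype))) :
    𝒞 (ModuleCat.of A q) := by
  refine h_ext (ModuleCat.of A p) (ModuleCat.of A q)
    (ModuleCat.of A (q ⧸ p.comap q.subtype))
    (Submodule.inclusion hpq) (p.comap q.subtype).mkQ
    (Submodule.inclusion_injective hpq) (Submodule.mkQ_surjective _) ?_ hp hq
  rw [Submodule.range_inclusion, Submodule.ker_mkQ]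

include h_sum in
lemma csum (ι : Type u) (M : ι → Type u) [∀ i, AddCommGroup (M i)] [∀ i, Module A (M i)]
    (hM : ∀ i, 𝒞 (ModuleCat.of A (M i))) : 𝒞 (ModuleCat.of A (⨁ i, M i)) :=
  h_sum ι (fun i => ModuleCat.of A (M i)) hM

lemma rangeToModule {M : Type u} [AddCommGroup M] [Module A M] (ι : Type u) [DecidableEq ι]
    (N : ι → Submodule A M) :
    LinearMap.range (DirectSum.toModule A ι M (fun i => (N i).subtype)) = ⨆ i, N i := by
  apply le_antisymm
  · rintro x ⟨y, rfl⟩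
    induction y using DirectSum.induction_on with
    | zero => simp
    | of i x =>
      rw [← DirectSum.lof_eq_of A, DirectSum.toModule_lof]
      exact Submodule.mem_iSup_of_mem i x.2
    | add x y hx hy => rw [map_add]; exact add_mem hx hy
  · refine iSup_le fun i x hx => ?_
    refine ⟨DirectSum.lof A ι (fun i => ↥(N i)) i ⟨x, hx⟩, ?_⟩
    rw [DirectSum.toModule_lof]
    rfl

include h_iso h_ker h_coker h_sum in
/-- a sup of a family of `𝒞`-submodules of a `𝒞`-module is in `𝒞` -/
lemma csup {M : Type u} [AddCommGroup M] [Module A M] (hM : 𝒞 (ModuleCat.of A M))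
    (ι : Type u) [DecidableEq ι] (N : ι → Submodule A M) (hN : ∀ i, 𝒞 (ModuleCat.of A (N i))) :
    𝒞 (ModuleCat.of A (⨆ i, N i : Submodule A M)) := by
  have hD : 𝒞 (ModuleCat.of A (⨁ i, (N i : Type u))) :=
    csum h_sum ι (fun i => ↥(N i)) hN
  have := cim h_iso h_ker h_coker (DirectSum.toModule A ι M (fun i => (N i).subtype)) hD hM
  exact ciso h_iso (LinearEquiv.ofEq _ _ (rangeToModule ι N)) this

/-- quotients of members of `𝒞` are in `Gen 𝒞` -/
lemma genOfSurj {M N : Type u} [AddCommGroup M] [Module A M] [AddCommGroup N] [Module A N]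
    (f : M →ₗ[A] N) (hf : Function.Surjective f) (hM : 𝒞 (ModuleCat.of A M)) :
    Gen 𝒞 (ModuleCat.of A N) := by
  refine ⟨PUnit.{u+1}, fun _ => ModuleCat.of A M,
    f.comp (DirectSum.toModule A PUnit.{u+1} M (fun _ => LinearMap.id)), fun _ => hM, ?_⟩
  intro n
  obtain ⟨m, rfl⟩ := hf n
  refine ⟨DirectSum.lof A PUnit.{u+1} (fun _ => M) PUnit.unit m, ?_⟩
  show f ((DirectSum.toModule A PUnit.{u+1} M (fun _ => LinearMap.id))
    (DirectSum.lof A PUnit.{u+1} (fun _ => M) PUnit.unit m)) = f m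
  rw [DirectSum.toModule_lof]
  rfl

include h_ext in
/-- the pullback construction: given surjections `q : V → T` and `s : S → T` with
`ker q ∈ 𝒞` and `S ∈ 𝒞`, there is a module `P ∈ 𝒞` with a surjection onto `V`. -/
lemma cpullback {V T S : Type u} [AddCommGroup V] [Module A V] [AddCommGroup T] [Module A T]
    [AddCommGroup S] [Module A S] (q : V →ₗ[A] T) (s : S →ₗ[A] T)
    (hq : Function.Surjective q) (hs : Function.Surjective s)
    (hkq : 𝒞 (ModuleCat.of A (LinearMap.ker q))) (hS : 𝒞 (ModuleCat.of A S)) :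
    ∃ (P : ModuleCat.{u} A) (ρ : P →ₗ[A] V), 𝒞 P ∧ Function.Surjective ρ := by
  set δ : V × S →ₗ[A] T := q.comp (LinearMap.fst A V S) - s.comp (LinearMap.snd A V S) with hδ
  have hmemδ : ∀ v z, ((v, z) ∈ LinearMap.ker δ) ↔ q v = s z := by
    intro v z
    rw [LinearMap.mem_ker, hδ]
    simp only [LinearMap.sub_apply, LinearMap.comp_apply, LinearMap.fst_apply,
      LinearMap.snd_apply]
    exact sub_eq_zero
  have hmem : ∀ x : LinearMap.ker q, (((x : V), (0 : S)) ∈ LinearMap.ker δ) := by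
    intro x
    rw [hmemδ, x.2, map_zero]
  set f : LinearMap.ker q →ₗ[A] LinearMap.ker δ :=
    LinearMap.codRestrict _ ((LinearMap.inl A V S).comp (LinearMap.ker q).subtype) hmem with hf
  set gg : LinearMap.ker δ →ₗ[A] S := (LinearMap.snd A V S).comp (LinearMap.ker δ).subtype
    with hgg
  refine ⟨ModuleCat.of A (LinearMap.ker δ),
    (LinearMap.fst A V S).comp (LinearMap.ker δ).subtype, ?_, ?_⟩
  · refine h_ext (ModuleCat.of A (LinearMap.ker q)) (ModuleCat.of A (LinearMap.ker δ))
      (ModuleCat.of A S) f gg ?_ ?_ ?_ hkq hS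
    · intro a b hab
      apply Subtype.ext
      have := congrArg (fun x : LinearMap.ker δ => (x : V × S).1) hab
      exact this
    · intro z
      obtain ⟨v, hv⟩ := hq (s z)
      exact ⟨⟨(v, z), (hmemδ v z).mpr hv⟩, rfl⟩
    · apply le_antisymm
      · rintro x ⟨y, rfl⟩
        rfl
      · rintro ⟨⟨v, z⟩, hvz⟩ hx
        have hz : z = 0 := hx
        subst hz
        have hv : q v = 0 := by
          have := (hmemδ v 0).mp hvz
          rwa [map_zero] at this
        exact ⟨⟨v, hv⟩, rfl⟩
  · intro v
    obtain ⟨z, hz⟩ := hs (q v)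
    exact ⟨⟨(v, z), (hmemδ v z).mpr hz.symm⟩, rfl⟩

noncomputable def subquotTopBotEquiv {M : Type u} [AddCommGroup M] [Module A M] {p q : Submodule A M}
    (hp : p = ⊥) (hq : q = ⊤) : (q ⧸ p.comap q.subtype) ≃ₗ[A] M := by
  subst hp; subst hq
  refine (Submodule.quotEquivOfEqBot _ ?_).trans
    (Submodule.topEquiv : (⊤ : Submodule A M) ≃ₗ[A] M)
  rw [Submodule.comap_bot, Submodule.ker_subtype]

/-- a module whose class holds is `Filt`-filtered (length one filtration) -/
lemma filtSingle (𝒞' : ModuleCat.{u} A → Prop) (M : ModuleCat.{u} A) (hM : 𝒞' M) :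
    Filt 𝒞' M := by
  refine ⟨1, fun ν => if ν = 0 then ⊥ else ⊤, ?_, by simp, by simp, ?_, ?_⟩
  · intro a b hab
    by_cases ha : a = 0
    · simp [ha]
    · have hb : b ≠ 0 := fun hb => ha (le_antisymm (hb ▸ hab) zero_le)
      simp [ha, hb]
  · intro ν hν hlim
    exact absurd (hlim.succ_lt (hlim.pos)) (by
      intro h
      have : ν ≤ 0 + 1 := by simpa using hν
      simp [Ordinal.add_one_eq_succ] at this h
      exact absurd (h.trans_le this) (lt_irrefl _))
  · intro l hl
    have hl0 : l = 0 := by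
      rw [Ordinal.lt_one_iff_zero] at hl
      exact hl
    subst hl0
    have h1 : (0 : Ordinal) + 1 ≠ 0 := by
      simp [Ordinal.add_one_eq_succ]
    exact ⟨M, hM, ⟨subquotTopBotEquiv (if_pos rfl) (if_neg h1)⟩⟩

include h_iso h_ker h_coker h_sum h_ext in
/-- the image of each stage of a `Gen 𝒞`-filtration under a map into a `𝒞`-module
belongs to `𝒞`. -/
lemma imageStages {X : Type u} [AddCommGroup X] [Module A X] (hX : 𝒞 (ModuleCat.of A X))
    {Y : Type u} [AddCommGroup Y] [Module A Y] (μ : Ordinal.{u})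
    (F : Ordinal.{u} → Submodule A Y) (hmono : Monotone F) (h0 : F 0 = ⊥)
    (hlim : ∀ ν ≤ μ, Order.IsSuccLimit ν → F ν = ⨆ (l : Ordinal.{u}) (_ : l < ν), F l)
    (hfac : ∀ l < μ, ∃ C : ModuleCat.{u} A, Gen 𝒞 C ∧
      Nonempty ((↥(F (l + 1)) ⧸ (F l).comap (F (l + 1)).subtype) ≃ₗ[A] (C : Type u)))
    (g : Y →ₗ[A] X) : ∀ l ≤ μ, 𝒞 (ModuleCat.of A (Submodule.map g (F l))) := by
  intro l
  induction l using Ordinal.induction with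
  | h l IH =>
  intro hlμ
  rcases Ordinal.zero_or_succ_or_isSuccLimit l with h00 | ⟨ν, rfl⟩ | hlim'
  · subst h00
    rw [h0, Submodule.map_bot]
    have : Subsingleton (⊥ : Submodule A X) :=
      ⟨fun a b => Subtype.ext (by rw [(Submodule.mem_bot A).mp a.2, (Submodule.mem_bot A).mp b.2])⟩
    exact czero h_iso h_sum _
  · -- successor case
    rw [← Ordinal.add_one_eq_succ] at hlμ ⊢
    have hν1 : ν < ν + 1 := by
      rw [Ordinal.add_one_eq_succ]; exact Order.lt_succ ν
    have hν : ν < μ := lt_of_lt_of_le hν1 hlμ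
    have IHν := IH ν hν1 hν.le
    obtain ⟨C, hC, ⟨e⟩⟩ := hfac ν hν
    obtain ⟨ι, Ms, p, hMs, hp⟩ := hC
    set Iν := Submodule.map g (F ν) with hIν
    set Iν1 := Submodule.map g (F (ν + 1)) with hIν1
    have hle : Iν ≤ Iν1 := Submodule.map_mono (hmono hν1.le)
    have hq0 : 𝒞 (ModuleCat.of A (X ⧸ Iν)) := cquot h_iso h_coker _ hX IHν
    set q : ↥(F (ν + 1)) →ₗ[A] X ⧸ Iν := Iν.mkQ ∘ₗ g ∘ₗ (F (ν + 1)).subtype with hqdef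
    have hleker : (F ν).comap (F (ν + 1)).subtype ≤ LinearMap.ker q := by
      intro x hx
      rw [LinearMap.mem_ker, hqdef]
      simp only [LinearMap.comp_apply, Submodule.subtype_apply, Submodule.mkQ_apply]
      rw [Submodule.Quotient.mk_eq_zero]
      exact Submodule.mem_map_of_mem hx
    set L := Submodule.liftQ _ q hleker with hL
    set Φ : (⨁ i, (Ms i : Type u)) →ₗ[A] X ⧸ Iν :=
      L ∘ₗ (e.symm.toLinearMap ∘ₗ p) with hΦdef
    have hD : 𝒞 (ModuleCat.of A (⨁ i, (Ms i : Type u))) := h_sum ι Ms hMs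
    have hΦ : 𝒞 (ModuleCat.of A (LinearMap.range Φ)) := cim h_iso h_ker h_coker Φ hD hq0
    have hrange : LinearMap.range Φ = Submodule.map Iν.mkQ Iν1 := by
      rw [hΦdef, LinearMap.range_comp]
      have hsurj : LinearMap.range (e.symm.toLinearMap ∘ₗ p) = ⊤ := by
        rw [LinearMap.range_eq_top]
        exact e.symm.surjective.comp hp
      rw [hsurj, Submodule.map_top, hL, Submodule.range_liftQ, hqdef,
        LinearMap.range_comp, LinearMap.range_comp, Submodule.range_subtype]
    set ψ : ↥Iν1 →ₗ[A] X ⧸ Iν := Iν.mkQ ∘ₗ Iν1.subtype with hψ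
    have hkψ : LinearMap.ker ψ = Iν.comap Iν1.subtype := by
      rw [hψ, LinearMap.ker_comp, Submodule.ker_mkQ]
    have hrψ : LinearMap.range ψ = Submodule.map Iν.mkQ Iν1 := by
      rw [hψ, LinearMap.range_comp, Submodule.range_subtype]
    have e2 : (↥Iν1 ⧸ Iν.comap Iν1.subtype) ≃ₗ[A] LinearMap.range Φ :=
      (Submodule.quotEquivOfEq _ _ hkψ.symm).trans
        ((ψ.quotKerEquivRange).trans (LinearEquiv.ofEq _ _ (by rw [hrψ, ← hrange])))
    exact cext h_iso h_ext hle IHν (ciso h_iso e2.symm hΦ)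
  · -- limit case
    haveI := Classical.decEq l.ToType
    have hFl : F l = ⨆ (l' : Ordinal.{u}) (_ : l' < l), F l' := hlim l hlμ hlim'
    set J : l.ToType → Submodule A X :=
      fun t => Submodule.map g (F (((Ordinal.ToType.mk (o := l)).symm t) : Ordinal)) with hJ
    have heq : Submodule.map g (F l) = ⨆ t, J t := by
      apply le_antisymm
      · rintro x ⟨y, hy, rfl⟩
        rw [hFl, iSup_subtype'] at hy
        have hdir : Directed (· ≤ ·) (fun t : {l' : Ordinal.{u} // l' < l} => F t.1) := by
          have hm : Monotone (fun t : {l' : Ordinal.{u} // l' < l} => F t.1) :=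
            fun a b hab => hmono hab
          exact hm.directed_le
        haveI : Nonempty {l' : Ordinal.{u} // l' < l} := ⟨⟨0, hlim'.pos⟩⟩
        obtain ⟨t, ht⟩ := (Submodule.mem_iSup_of_directed _ hdir).mp hy
        have : g y ∈ J ((Ordinal.ToType.mk (o := l)) ⟨t.1, t.2⟩) := by
          rw [hJ]
          simp only [OrderIso.symm_apply_apply]
          exact Submodule.mem_map_of_mem ht
        exact le_iSup J _ this
      · refine iSup_le fun t => ?_
        exact Submodule.map_mono (hmono (le_of_lt ((Ordinal.ToType.mk (o := l)).symm t).2))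
    refine ciso h_iso (LinearEquiv.ofEq _ _ heq.symm) ?_
    refine csup h_iso h_ker h_coker h_sum hX l.ToType J fun t => ?_
    exact IH _ ((Ordinal.ToType.mk (o := l)).symm t).2
      (le_of_lt (lt_of_lt_of_le ((Ordinal.ToType.mk (o := l)).symm t).2 hlμ))

include h_iso h_ker h_coker h_sum h_ext in
/-- the range of a map from a `FiltGen 𝒞`-module to a `𝒞`-module is in `𝒞`. -/
lemma crange {X : Type u} [AddCommGroup X] [Module A X] (hX : 𝒞 (ModuleCat.of A X))
    (Y : ModuleCat.{u} A) (hY : FiltGen 𝒞 Y) (g : Y →ₗ[A] X) :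
    𝒞 (ModuleCat.of A (LinearMap.range g)) := by
  obtain ⟨μ, F, hmono, h0, htop, hlim, hfac⟩ := hY
  have := imageStages h_iso h_ker h_coker h_sum h_ext hX μ F hmono h0 hlim hfac g μ le_rfl
  rw [htop, Submodule.map_top] at this
  exact this

include h_iso h_ker h_coker h_sum h_ext in
/-- the kernel of a map from a `FiltGen 𝒞`-filtered module to a `𝒞`-module is
again `FiltGen 𝒞`-filtered. -/
lemma ckerFilt {X : Type u} [AddCommGroup X] [Module A X] (hX : 𝒞 (ModuleCat.of A X))
    {Y : Type u} [AddCommGroup Y] [Module A Y] (μ : Ordinal.{u})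
    (F : Ordinal.{u} → Submodule A Y) (hmono : Monotone F) (h0 : F 0 = ⊥) (htop : F μ = ⊤)
    (hlim : ∀ ν ≤ μ, Order.IsSuccLimit ν → F ν = ⨆ (l : Ordinal.{u}) (_ : l < ν), F l)
    (hfac : ∀ l < μ, ∃ C : ModuleCat.{u} A, Gen 𝒞 C ∧
      Nonempty ((↥(F (l + 1)) ⧸ (F l).comap (F (l + 1)).subtype) ≃ₗ[A] (C : Type u)))
    (g : Y →ₗ[A] X) : FiltGen 𝒞 (ModuleCat.of A (LinearMap.ker g)) := by
  set k := LinearMap.ker g with hk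
  refine ⟨μ, fun ν => (F ν).comap k.subtype, fun a b hab => Submodule.comap_mono (hmono hab),
    ?_, ?_, ?_, ?_⟩
  · show Submodule.comap k.subtype (F 0) = ⊥
    rw [h0, Submodule.comap_bot, Submodule.ker_subtype]
  · show Submodule.comap k.subtype (F μ) = ⊤
    rw [htop, Submodule.comap_top]
  · -- limit stages
    intro ν hν hlim'
    apply le_antisymm
    · intro x hx
      have hx' : k.subtype x ∈ F ν := Submodule.mem_comap.mp hx
      rw [hlim ν hν hlim', iSup_subtype'] at hx'
      have hm : Monotone (fun t : {l' : Ordinal.{u} // l' < ν} => F t.1) :=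
        fun a b hab => hmono hab
      have hdir : Directed (· ≤ ·) (fun t : {l' : Ordinal.{u} // l' < ν} => F t.1) :=
        hm.directed_le
      haveI : Nonempty {l' : Ordinal.{u} // l' < ν} := ⟨⟨0, hlim'.pos⟩⟩
      obtain ⟨t, ht⟩ := (Submodule.mem_iSup_of_directed _ hdir).mp hx'
      exact Submodule.mem_iSup_of_mem t.1
        (Submodule.mem_iSup_of_mem t.2 (Submodule.mem_comap.mpr ht))
    · exact iSup_le fun l => iSup_le fun hl => Submodule.comap_mono (hmono hl.le)
  · -- factors
    intro l hl
    obtain ⟨C, hC, ⟨e⟩⟩ := hfac l hl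
    obtain ⟨ι, Ms, p, hMs, hp⟩ := hC
    have hll1 : l ≤ l + 1 := by
      rw [Ordinal.add_one_eq_succ]; exact Order.le_succ l
    set Fl1 := F (l + 1) with hFl1
    set Kl' : Submodule A ↥Fl1 := (k ⊓ F l).comap Fl1.subtype with hKl'
    set g₀ : ↥Fl1 →ₗ[A] X := g ∘ₗ Fl1.subtype with hg₀
    have hle0 : Kl' ≤ LinearMap.ker g₀ := by
      intro x hx
      have hxk : (x : Y) ∈ k := hx.1
      rw [LinearMap.mem_ker]
      exact hxk
    set g' : (↥Fl1 ⧸ Kl') →ₗ[A] X := Kl'.liftQ g₀ hle0 with hg'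
    refine ⟨ModuleCat.of A (LinearMap.ker g'), ?_, ⟨?_⟩⟩
    · -- `ker g'` belongs to `Gen 𝒞`
      set Nl : Submodule A ↥Fl1 := (F l).comap Fl1.subtype with hNl
      have hKN : Kl' ≤ Nl := by
        intro x hx
        exact hx.2
      set q' : (↥Fl1 ⧸ Kl') →ₗ[A] (↥Fl1 ⧸ Nl) :=
        Kl'.liftQ Nl.mkQ (by rw [Submodule.ker_mkQ]; exact hKN) with hq'
      have hq'surj : Function.Surjective q' := by
        intro z
        obtain ⟨w, rfl⟩ := Nl.mkQ_surjective z
        exact ⟨Kl'.mkQ w, rfl⟩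
      set s : (⨁ i, (Ms i : Type u)) →ₗ[A] (↥Fl1 ⧸ Nl) := e.symm.toLinearMap ∘ₗ p with hs
      have hssurj : Function.Surjective s := e.symm.surjective.comp hp
      set Il := Submodule.map g (F l) with hIl
      have hIlC : 𝒞 (ModuleCat.of A Il) :=
        imageStages h_iso h_ker h_coker h_sum h_ext hX μ F hmono h0 hlim hfac g l hl.le
      set χ₁ : ↥Nl →ₗ[A] ↥Il :=
        LinearMap.codRestrict Il (g₀ ∘ₗ Nl.subtype) (fun y => Submodule.mem_map_of_mem y.2)
        with hχ₁
      have hχ₁surj : Function.Surjective χ₁ := by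
        rintro ⟨z, hz⟩
        obtain ⟨w, hw, rfl⟩ := hz
        exact ⟨⟨⟨w, hmono hll1 hw⟩, hw⟩, Subtype.ext rfl⟩
      set χ₂ : ↥Nl →ₗ[A] ↥(Submodule.map Kl'.mkQ Nl) :=
        LinearMap.codRestrict _ (Kl'.mkQ ∘ₗ Nl.subtype) (fun y => Submodule.mem_map_of_mem y.2)
        with hχ₂
      have hχ₂surj : Function.Surjective χ₂ := by
        rintro ⟨z, hz⟩
        obtain ⟨w, hw, rfl⟩ := hz
        exact ⟨⟨w, hw⟩, Subtype.ext rfl⟩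
      have hkerχ : LinearMap.ker χ₁ = LinearMap.ker χ₂ := by
        ext y
        simp only [LinearMap.mem_ker, hχ₁, hχ₂, LinearMap.codRestrict, LinearMap.coe_mk,
          AddHom.coe_mk, Subtype.ext_iff, Submodule.coe_zero, LinearMap.comp_apply,
          Submodule.subtype_apply, Submodule.mkQ_apply]
        rw [Submodule.Quotient.mk_eq_zero]
        constructor
        · intro hy
          exact ⟨hy, y.2⟩
        · intro hy
          exact hy.1
      have e3 : (↥Il) ≃ₗ[A] ↥(Submodule.map Kl'.mkQ Nl) :=
        ((χ₁.quotKerEquivOfSurjective hχ₁surj).symm.trans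
          (Submodule.quotEquivOfEq _ _ hkerχ)).trans (χ₂.quotKerEquivOfSurjective hχ₂surj)
      have hkq' : LinearMap.ker q' = Submodule.map Kl'.mkQ Nl := by
        rw [hq', Submodule.ker_liftQ, Submodule.ker_mkQ]
      have hCk : 𝒞 (ModuleCat.of A (LinearMap.ker q')) := by
        rw [hkq']
        exact ciso h_iso e3 hIlC
      obtain ⟨P, ρ, hP, hρ⟩ := cpullback h_ext q' s hq'surj hssurj hCk (h_sum ι Ms hMs)
      set τ : P →ₗ[A] X := g' ∘ₗ ρ with hτ
      have hkτ : 𝒞 (ModuleCat.of A (LinearMap.ker τ)) := h_ker P (ModuleCat.of A X) τ hP hX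
      have hmemσ : ∀ x : LinearMap.ker τ, ρ ((LinearMap.ker τ).subtype x) ∈ LinearMap.ker g' :=
        fun x => x.2
      set σ : ↥(LinearMap.ker τ) →ₗ[A] ↥(LinearMap.ker g') :=
        LinearMap.codRestrict _ (ρ ∘ₗ (LinearMap.ker τ).subtype) hmemσ with hσdef
      have hσ : Function.Surjective σ := by
        rintro ⟨z, hz⟩
        obtain ⟨w, rfl⟩ := hρ z
        exact ⟨⟨w, hz⟩, Subtype.ext rfl⟩
      exact genOfSurj σ hσ hkτ
    · -- the subquotient equivalence
      set K1 := (F (l + 1)).comap k.subtype with hK1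
      set θ : ↥K1 →ₗ[A] ↥Fl1 :=
        LinearMap.codRestrict Fl1 (k.subtype ∘ₗ K1.subtype) (fun y => y.2) with hθ
      have hmemφ : ∀ y : ↥K1, Kl'.mkQ (θ y) ∈ LinearMap.ker g' := by
        intro y
        rw [LinearMap.mem_ker, Submodule.mkQ_apply, hg', Submodule.liftQ_apply]
        exact (y : k).2
      set φ : ↥K1 →ₗ[A] ↥(LinearMap.ker g') :=
        LinearMap.codRestrict _ (Kl'.mkQ ∘ₗ θ) hmemφ with hφ
      have hφsurj : Function.Surjective φ := by
        rintro ⟨z, hz⟩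
        rw [hg', Submodule.ker_liftQ] at hz
        obtain ⟨w, hw, rfl⟩ := hz
        have hwk : (w : Y) ∈ k := hw
        refine ⟨⟨⟨(w : Y), hwk⟩, w.2⟩, Subtype.ext ?_⟩
        show Kl'.mkQ _ = Kl'.mkQ w
        congr 1
      have hkerφ : LinearMap.ker φ = ((F l).comap k.subtype).comap K1.subtype := by
        ext y
        simp only [LinearMap.mem_ker, hφ, LinearMap.codRestrict, LinearMap.coe_mk,
          AddHom.coe_mk, Subtype.ext_iff, Submodule.coe_zero, LinearMap.comp_apply,
          Submodule.mkQ_apply, Submodule.mem_comap]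
        rw [Submodule.Quotient.mk_eq_zero]
        constructor
        · intro hy
          exact hy.2
        · intro hy
          exact ⟨((y : k)).2, hy⟩
      exact (Submodule.quotEquivOfEq _ _ hkerφ.symm).trans (φ.quotKerEquivOfSurjective hφsurj)

include h_iso h_ker h_coker h_sum h_ext in
/-- a submodule of a `𝒞`-module which is `FiltGen 𝒞`-filtered belongs to `𝒞`. -/
lemma cOfFiltSub {M : Type u} [AddCommGroup M] [Module A M] (hM : 𝒞 (ModuleCat.of A M))
    (p : Submodule A M) (hp : FiltGen 𝒞 (ModuleCat.of A p)) : 𝒞 (ModuleCat.of A p) := by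
  have := crange h_iso h_ker h_coker h_sum h_ext hM (ModuleCat.of A p) hp p.subtype
  rw [Submodule.range_subtype] at this
  exact this

end Aux

/-- If `𝒞` is closed under isomorphisms, kernels, cokernels, direct sums and
extensions, then `𝔞(FiltGen 𝒞) = 𝒞`. -/
theorem stmt3 {A : Type u} [Ring A] (𝒞 : ModuleCat.{u} A → Prop)
    (h_iso : IsoClosed 𝒞) (h_ker : ClosedUnderKernels 𝒞) (h_coker : ClosedUnderCokernels 𝒞)
    (h_sum : ClosedUnderDirectSums 𝒞) (h_ext : ClosedUnderExtensions 𝒞) :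
    aSub (FiltGen 𝒞) = 𝒞 := by
  funext X
  apply propext
  constructor
  · rintro ⟨hXT, ha⟩
    obtain ⟨μ, F, hmono, h0, htop, hlim, hfac⟩ := hXT
    have key : ∀ l ≤ μ, 𝒞 (ModuleCat.of A (F l)) := by
      intro l
      induction l using Ordinal.induction with
      | h l IH =>
      intro hlμ
      rcases Ordinal.zero_or_succ_or_isSuccLimit l with h00 | ⟨ν, rfl⟩ | hlim'
      · subst h00
        rw [h0]
        have : Subsingleton (⊥ : Submodule A X) :=
          ⟨fun a b => Subtype.ext (by rw [(Submodule.mem_bot A).mp a.2,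
            (Submodule.mem_bot A).mp b.2])⟩
        exact czero h_iso h_sum _
      · -- successor case
        rw [← Ordinal.add_one_eq_succ] at hlμ ⊢
        have hν1 : ν < ν + 1 := by
          rw [Ordinal.add_one_eq_succ]; exact Order.lt_succ ν
        have hν : ν < μ := lt_of_lt_of_le hν1 hlμ
        have IHν := IH ν hν1 hν.le
        obtain ⟨C, hC, ⟨e⟩⟩ := hfac ν hν
        obtain ⟨ι, Ms, p, hMs, hp⟩ := hC
        set Nν := (F ν).comap (F (ν + 1)).subtype with hNν
        set q : ↥(F (ν + 1)) →ₗ[A] C := e.toLinearMap ∘ₗ Nν.mkQ with hq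
        have hqsurj : Function.Surjective q := e.surjective.comp Nν.mkQ_surjective
        have hkerq : LinearMap.ker q = Nν := by
          rw [hq, LinearMap.ker_comp, LinearEquiv.ker, Submodule.comap_bot, Submodule.ker_mkQ]
        have hkC : 𝒞 (ModuleCat.of A (LinearMap.ker q)) := by
          rw [hkerq]
          exact ciso h_iso (Submodule.comapSubtypeEquivOfLe (hmono hν1.le)).symm IHν
        obtain ⟨P, ρ, hP, hρ⟩ := cpullback h_ext q p hqsurj hp hkC (h_sum ι Ms hMs)
        set π : P →ₗ[A] X := (F (ν + 1)).subtype ∘ₗ ρ with hπ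
        have hPT : FiltGen 𝒞 P :=
          filtSingle (Gen 𝒞) P (genOfSurj LinearMap.id Function.surjective_id hP)
        have hkerT : FiltGen 𝒞 (ModuleCat.of A (LinearMap.ker π)) := ha P π hPT
        have hkerC : 𝒞 (ModuleCat.of A (LinearMap.ker π)) :=
          cOfFiltSub h_iso h_ker h_coker h_sum h_ext hP (LinearMap.ker π) hkerT
        have hrangeC : 𝒞 (ModuleCat.of A (LinearMap.range π)) :=
          cim' h_iso h_ker h_coker π hP hkerC
        have hrπ : LinearMap.range π = F (ν + 1) := by
          rw [hπ, LinearMap.range_comp, LinearMap.range_eq_top.mpr hρ, Submodule.map_top,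
            Submodule.range_subtype]
        exact ciso h_iso (LinearEquiv.ofEq _ _ hrπ) hrangeC
      · -- limit case
        haveI := Classical.decEq l.ToType
        have hFl : F l = ⨆ (l' : Ordinal.{u}) (_ : l' < l), F l' := hlim l hlμ hlim'
        set J : l.ToType → Submodule A X :=
          fun t => F (((Ordinal.ToType.mk (o := l)).symm t) : Ordinal) with hJ
        have hJC : ∀ t, 𝒞 (ModuleCat.of A (J t)) := fun t =>
          IH _ ((Ordinal.ToType.mk (o := l)).symm t).2
            (le_of_lt (lt_of_lt_of_le ((Ordinal.ToType.mk (o := l)).symm t).2 hlμ))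
        set h : (⨁ t, (J t : Type u)) →ₗ[A] X :=
          DirectSum.toModule A l.ToType X (fun t => (J t).subtype) with hh
        have hD : 𝒞 (ModuleCat.of A (⨁ t, (J t : Type u))) :=
          csum h_sum l.ToType (fun t => ↥(J t)) hJC
        have hDT : FiltGen 𝒞 (ModuleCat.of A (⨁ t, (J t : Type u))) :=
          filtSingle (Gen 𝒞) _ (genOfSurj LinearMap.id Function.surjective_id hD)
        have hkerT := ha (ModuleCat.of A (⨁ t, (J t : Type u))) h hDT
        have hkerC : 𝒞 (ModuleCat.of A (LinearMap.ker h)) :=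
          cOfFiltSub h_iso h_ker h_coker h_sum h_ext hD (LinearMap.ker h) hkerT
        have hrangeC : 𝒞 (ModuleCat.of A (LinearMap.range h)) :=
          cim' h_iso h_ker h_coker h hD hkerC
        have hrh : LinearMap.range h = F l := by
          rw [hh, rangeToModule]
          apply le_antisymm
          · exact iSup_le fun t => hmono (le_of_lt ((Ordinal.ToType.mk (o := l)).symm t).2)
          · intro x hx
            have hx' := hx
            rw [hFl, iSup_subtype'] at hx'
            have hm : Monotone (fun t : {l' : Ordinal.{u} // l' < l} => F t.1) :=
              fun a b hab => hmono hab
            haveI : Nonempty {l' : Ordinal.{u} // l' < l} := ⟨⟨0, hlim'.pos⟩⟩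
            obtain ⟨t, ht⟩ := (Submodule.mem_iSup_of_directed _ hm.directed_le).mp hx'
            have : x ∈ J ((Ordinal.ToType.mk (o := l)) ⟨t.1, t.2⟩) := by
              rw [hJ]
              simp only [OrderIso.symm_apply_apply]
              exact ht
            exact Submodule.mem_iSup_of_mem _ this
        exact ciso h_iso (LinearEquiv.ofEq _ _ hrh) hrangeC
    have hμ := key μ le_rfl
    rw [htop] at hμ
    exact h_iso _ X (Submodule.topEquiv : (⊤ : Submodule A X) ≃ₗ[A] X) hμ
  · intro hX
    refine ⟨filtSingle (Gen 𝒞) X (genOfSurj LinearMap.id Function.surjective_id hX), ?_⟩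
    intro Y gg hY
    obtain ⟨μ, F, hmono, h0, htop, hlim, hfac⟩ := hY
    exact ckerFilt h_iso h_ker h_coker h_sum h_ext hX μ F hmono h0 htop hlim hfac gg
end

section
/- Let A be a ring and let 𝒞 be a class of right A-modules, closed under isomorphisms, that is closed under kernels of homomorphisms between modules in 𝒞 and under arbitrary direct sums. If X ∈ Gen 𝒞 and f : X → C is a surjective homomorphism with C ∈ 𝒞, then Ker f ∈ Gen 𝒞. -/
universe u

open DirectSum

/-- If `𝒞` is closed under isomorphisms, kernels and direct sums, `X ∈ Gen 𝒞`
and `f : X → C` is surjective with `C ∈ 𝒞`, then `Ker f ∈ Gen 𝒞`. -/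
theorem stmt4 {A : Type u} [Ring A] (𝒞 : ModuleCat.{u} A → Prop)
    (h_iso : IsoClosed 𝒞) (h_ker : ClosedUnderKernels 𝒞) (h_sum : ClosedUnderDirectSums 𝒞)
    (X C : ModuleCat.{u} A) (hX : Gen 𝒞 X) (hC : 𝒞 C)
    (f : X →ₗ[A] C) (hf : Function.Surjective f) :
    Gen 𝒞 (ModuleCat.of A (LinearMap.ker f)) := by
  obtain ⟨ι, M, g, hM, hg⟩ := hX
  set φ : (⨁ i, (M i : Type u)) →ₗ[A] C := f.comp g with hφ
  have hK : 𝒞 (ModuleCat.of A (LinearMap.ker φ)) :=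
    h_ker (ModuleCat.of A (⨁ i, (M i : Type u))) C φ (h_sum ι M hM) hC
  let p : LinearMap.ker φ →ₗ[A] LinearMap.ker f :=
    LinearMap.codRestrict _ (g.comp (LinearMap.ker φ).subtype) (fun x => by
      have hx := x.2
      simp only [hφ, LinearMap.mem_ker, LinearMap.comp_apply] at hx
      exact hx)
  have hp : Function.Surjective p := by
    rintro ⟨x, hx⟩
    obtain ⟨y, hy⟩ := hg x
    have hyK : y ∈ LinearMap.ker φ := by
      simp [φ, LinearMap.mem_ker, hy, LinearMap.mem_ker.mp hx]
    exact ⟨⟨y, hyK⟩, Subtype.ext (by exact hy)⟩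
  refine ⟨PUnit, fun _ => ModuleCat.of A (LinearMap.ker φ),
    DirectSum.toModule A PUnit _ (fun _ => p), fun _ => hK, ?_⟩
  intro x
  obtain ⟨k, hk⟩ := hp x
  exact ⟨DirectSum.lof A PUnit _ PUnit.unit k, by
    simp only [DirectSum.toModule_lof]; exact hk⟩
end

section
/- Let A be a ring, let T₀ be a right A-module admitting a presilting presentation, and let A →f→ T₀ → T₁ → 0 be an exact sequence of right A-modules in which f is a left Add T₀-approximation of A. Then T = T₀ ⊕ T₁ is a silting A-module with Gen T = Gen T₀, and T₁ is partial silting with respect to some projective presentation σ₁ of T₁ satisfying 𝒟_{σ₁} = Gen T. -/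
universe u

open DirectSum

section Helpers
variable {A : Type u} [Ring A]

lemma genM_of_surj {T N : ModuleCat.{u} A} (p : (T : Type u) →ₗ[A] N) (hp : Function.Surjective p) :
    GenM T N := by
  refine ⟨PUnit, (Finsupp.lsum ℕ fun _ : PUnit => p), fun n => ?_⟩
  obtain ⟨t, ht⟩ := hp n
  exact ⟨Finsupp.single PUnit.unit t, by simp [ht]⟩

lemma genM_quot {T M N : ModuleCat.{u} A} (f : (M : Type u) →ₗ[A] N) (hf : Function.Surjective f)
    (hM : GenM T M) : GenM T N := by
  obtain ⟨ι, p, hp⟩ := hM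
  exact ⟨ι, f.comp p, hf.comp hp⟩

lemma genM_sums (T : ModuleCat.{u} A) : ClosedUnderDirectSums (GenM T) := by
  classical
  intro ι M hM
  choose κ p hp using hM
  let F : ((Σ i, κ i) →₀ (T : Type u)) →ₗ[A] (⨁ i, (M i : Type u)) :=
    Finsupp.lsum ℕ fun s => (DirectSum.lof A ι (fun i => (M i : Type u)) s.1) ∘ₗ
      ((p s.1) ∘ₗ Finsupp.lsingle s.2)
  have key : ∀ i : ι, F ∘ₗ Finsupp.lmapDomain (T : Type u) A (Sigma.mk i)
      = (DirectSum.lof A ι (fun i => (M i : Type u)) i) ∘ₗ p i := by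
    intro i
    apply Finsupp.lhom_ext
    intro k t
    simp [F, Finsupp.lmapDomain, Finsupp.mapDomain_single]
  have hrange : ∀ y : ⨁ i, (M i : Type u), y ∈ LinearMap.range F := by
    intro y
    refine DirectSum.induction_on y (zero_mem _) ?_ (fun a b ha hb => add_mem ha hb)
    intro i x
    obtain ⟨z, hz⟩ := hp i x
    refine ⟨Finsupp.lmapDomain (T : Type u) A (Sigma.mk i) z, ?_⟩
    have h := LinearMap.congr_fun (key i) z
    simp only [LinearMap.comp_apply] at h
    rw [h, hz, DirectSum.lof_eq_of]
  exact ⟨_, F, fun y => hrange y⟩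

lemma dclass_quot {P Q : ModuleCat.{u} A} (σ : (P : Type u) →ₗ[A] Q) (hP : Module.Projective A P)
    {X Y : ModuleCat.{u} A} (p : (X : Type u) →ₗ[A] Y) (hp : Function.Surjective p)
    (hX : Dclass σ X) : Dclass σ Y := by
  intro φ
  obtain ⟨φ', hφ'⟩ := Module.projective_lifting_property p φ hp
  obtain ⟨η, hη⟩ := hX φ'
  refine ⟨p ∘ₗ η, ?_⟩
  show (p ∘ₗ η) ∘ₗ σ = φ
  apply LinearMap.ext
  intro x
  have h1 : η (σ x) = φ' x := LinearMap.congr_fun hη x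
  have h2 : p (φ' x) = φ x := LinearMap.congr_fun hφ' x
  simp [h1, h2]

lemma dclass_ext {P Q : ModuleCat.{u} A} (σ : (P : Type u) →ₗ[A] Q) (hQ : Module.Projective A Q)
    {X Y Z : ModuleCat.{u} A} (i : (X : Type u) →ₗ[A] Y) (q : (Y : Type u) →ₗ[A] Z)
    (hi : Function.Injective i) (hq : Function.Surjective q)
    (hex : LinearMap.range i = LinearMap.ker q)
    (hX : Dclass σ X) (hZ : Dclass σ Z) : Dclass σ Y := by
  intro φ
  obtain ⟨η, hη⟩ := hZ (q ∘ₗ φ)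
  obtain ⟨η', hη'⟩ := Module.projective_lifting_property q η hq
  have hmem : ∀ x : (P : Type u), φ x - η' (σ x) ∈ LinearMap.range i := by
    intro x
    rw [hex, LinearMap.mem_ker, map_sub]
    have h1 : q (η' (σ x)) = η (σ x) := LinearMap.congr_fun hη' (σ x)
    have h2 : η (σ x) = q (φ x) := LinearMap.congr_fun hη x
    rw [h1, h2, sub_self]
  let e := LinearEquiv.ofInjective i hi
  let ξ : (P : Type u) →ₗ[A] X :=
    e.symm.toLinearMap ∘ₗ LinearMap.codRestrict (LinearMap.range i) (φ - η' ∘ₗ σ) hmem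
  have hiξ : ∀ x, i (ξ x) = φ x - η' (σ x) := by
    intro x
    have h3 : ∀ y : LinearMap.range i, i (e.symm y) = (y : (Y : Type u)) := by
      intro y
      have := e.apply_symm_apply y
      have h4 : (e (e.symm y) : (Y : Type u)) = i (e.symm y) :=
        LinearEquiv.ofInjective_apply i _
      rw [← h4, this]
    exact h3 ⟨φ x - η' (σ x), hmem x⟩
  obtain ⟨ζ, hζ⟩ := hX ξ
  refine ⟨η' + i ∘ₗ ζ, ?_⟩
  show (η' + i ∘ₗ ζ) ∘ₗ σ = φ
  apply LinearMap.ext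
  intro x
  have h5 : ζ (σ x) = ξ x := LinearMap.congr_fun hζ x
  simp only [LinearMap.comp_apply, LinearMap.add_apply, h5, hiξ x]
  abel

lemma range_prodMap' {M M₂ M₃ M₄ : Type u} [AddCommGroup M] [AddCommGroup M₂] [AddCommGroup M₃]
    [AddCommGroup M₄] [Module A M] [Module A M₂] [Module A M₃] [Module A M₄]
    (f : M →ₗ[A] M₂) (g : M₃ →ₗ[A] M₄) :
    LinearMap.range (f.prodMap g) = (LinearMap.range f).prod (LinearMap.range g) := by
  ext ⟨a, b⟩
  constructor
  · rintro ⟨⟨x, y⟩, h⟩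
    obtain ⟨h1, h2⟩ := Prod.mk.injEq .. ▸ h
    exact ⟨⟨x, h1⟩, ⟨y, h2⟩⟩
  · rintro ⟨⟨x, hx⟩, ⟨y, hy⟩⟩
    exact ⟨(x, y), by simp [hx, hy]⟩

end Helpers

/-- If `T₀` admits a presilting presentation and `A →f→ T₀ →g→ T₁ → 0` is
exact with `f` a left `Add T₀`-approximation, then `T = T₀ ⊕ T₁` is silting with
`Gen T = Gen T₀`, and `T₁` is partial silting w.r.t. a presentation `σ₁` with
`𝒟_{σ₁} = Gen T`. -/
theorem stmt5 {A : Type u} [Ring A] (T₀ T₁ : ModuleCat.{u} A)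
    (pp₀ : ProjPres T₀) (hpre : IsPresilting pp₀)
    (f : ModuleCat.of A A →ₗ[A] T₀) (g : T₀ →ₗ[A] T₁)
    (hg : Function.Surjective g) (hexact : LinearMap.range f = LinearMap.ker g)
    (happrox : IsLeftAddApprox T₀ f) :
    IsSilting (ModuleCat.of A (Prod (T₀ : Type u) (T₁ : Type u))) ∧
    GenM (ModuleCat.of A (Prod (T₀ : Type u) (T₁ : Type u))) = GenM T₀ ∧
    ∃ pp₁ : ProjPres T₁, IsPartialSiltingWrt pp₁ ∧
      Dclass pp₁.σ = GenM (ModuleCat.of A (Prod (T₀ : Type u) (T₁ : Type u))) := by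
  classical
  haveI hP := pp₀.projP
  haveI hQ := pp₀.projQ
  haveI : Module.Projective A (ModuleCat.of A A : Type u) := inferInstanceAs (Module.Projective A A)
  obtain ⟨f', hf'⟩ := Module.projective_lifting_property pp₀.π f pp₀.surj
  set TT : ModuleCat.{u} A := ModuleCat.of A (Prod (T₀ : Type u) (T₁ : Type u)) with hTT
  set P₁ : ModuleCat.{u} A :=
    ModuleCat.of A (Prod (pp₀.P : Type u) (ModuleCat.of A A : Type u)) with hP₁def
  haveI hP₁proj : Module.Projective A (P₁ : Type u) :=
    inferInstanceAs (Module.Projective A (Prod (pp₀.P : Type u) (ModuleCat.of A A : Type u)))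
  let σ₁ := pp₀.σ.coprod f'
  let π₁ := g ∘ₗ pp₀.π
  let uno : (ModuleCat.of A A : Type u) := (1 : A)
  have hπσ : ∀ x, pp₀.π (pp₀.σ x) = 0 := by
    intro x
    have : pp₀.σ x ∈ LinearMap.ker pp₀.π := pp₀.exact ▸ LinearMap.mem_range_self _ x
    exact this
  -- D(σ₁) ⊆ Gen T₀
  have h1 : ∀ X : ModuleCat.{u} A, @Dclass A _ P₁ pp₀.Q σ₁ X → GenM T₀ X := by
    intro X hX
    refine ⟨((T₀ : Type u) →ₗ[A] (X : Type u)), Finsupp.lsum ℕ (fun h => h), fun x => ?_⟩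
    let tss : (ModuleCat.of A A : Type u) →ₗ[A] (X : Type u) :=
      LinearMap.toSpanSingleton A (X : Type u) x
    obtain ⟨η, hη⟩ := hX ((0 : (pp₀.P : Type u) →ₗ[A] X).coprod tss)
    have hη' : η ∘ₗ σ₁ = (0 : (pp₀.P : Type u) →ₗ[A] X).coprod tss := hη
    have hησ₀ : ∀ p, η (pp₀.σ p) = 0 := by
      intro p
      have h := LinearMap.congr_fun hη' (p, 0)
      simpa [σ₁] using h
    have hηf' : η (f' uno) = x := by
      have h := LinearMap.congr_fun hη' (0, uno)
      have hL : σ₁ ((0 : (pp₀.P : Type u)), uno) = f' uno := by simp [σ₁]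
      have hR : ((0 : (pp₀.P : Type u) →ₗ[A] X).coprod tss) (0, uno) = x := by
        have htss : tss uno = (1 : A) • x := rfl
        simp [htss]
      rw [LinearMap.comp_apply, hL, hR] at h
      exact h
    have hker : LinearMap.ker pp₀.π ≤ LinearMap.ker η := by
      rw [← pp₀.exact]
      rintro q ⟨p, rfl⟩
      exact hησ₀ p
    let e := pp₀.π.quotKerEquivOfSurjective pp₀.surj
    let η₂ : (T₀ : Type u) →ₗ[A] X :=
      ((LinearMap.ker pp₀.π).liftQ η hker) ∘ₗ e.symm.toLinearMap
    have he : ∀ q, e (Submodule.Quotient.mk q) = pp₀.π q := by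
      intro q; rfl
    have hη₂ : ∀ q, η₂ (pp₀.π q) = η q := by
      intro q
      have hs : e.symm (pp₀.π q) = Submodule.Quotient.mk q := by
        rw [← he q, e.symm_apply_apply]
      show ((LinearMap.ker pp₀.π).liftQ η hker) (e.symm (pp₀.π q)) = η q
      rw [hs]
      rfl
    refine ⟨Finsupp.single η₂ (f uno), ?_⟩
    have hfx : η₂ (f uno) = x := by
      have h : pp₀.π (f' uno) = f uno := LinearMap.congr_fun hf' uno
      rw [← h, hη₂, hηf']
    simp [hfx]
  -- Gen T₀ ⊆ D(σ₁)
  have h2 : ∀ X : ModuleCat.{u} A, GenM T₀ X → @Dclass A _ P₁ pp₀.Q σ₁ X := by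
    rintro X ⟨κ, p, hp⟩
    intro φ
    let φn : Prod (pp₀.P : Type u) (ModuleCat.of A A : Type u) →ₗ[A] (X : Type u) := φ
    obtain ⟨φ', hφ'⟩ := Module.projective_lifting_property p φn hp
    let ψ : (pp₀.P : Type u) →ₗ[A] (κ →₀ (T₀ : Type u)) :=
      φ' ∘ₗ LinearMap.inl A (pp₀.P : Type u) (ModuleCat.of A A : Type u)
    let α : (ModuleCat.of A A : Type u) →ₗ[A] (κ →₀ (T₀ : Type u)) :=
      φ' ∘ₗ LinearMap.inr A (pp₀.P : Type u) (ModuleCat.of A A : Type u)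
    have hAdd : memAdd T₀ (ModuleCat.of A (κ →₀ (T₀ : Type u))) :=
      ⟨κ, LinearMap.id, LinearMap.id, rfl⟩
    obtain ⟨β₀, hβ⟩ := happrox.2 _ hAdd α
    let β : (T₀ : Type u) →ₗ[A] (κ →₀ (T₀ : Type u)) := β₀
    have hβ' : β ∘ₗ f = α := hβ
    obtain ⟨ζ₀, hζ⟩ := hpre κ ψ
    let ζ : (pp₀.Q : Type u) →ₗ[A] (κ →₀ (T₀ : Type u)) := ζ₀
    have hζ' : ζ ∘ₗ pp₀.σ = ψ := hζ
    obtain ⟨δ₀, hδ⟩ := happrox.2 _ hAdd (β ∘ₗ f - ζ ∘ₗ f')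
    let δ : (T₀ : Type u) →ₗ[A] (κ →₀ (T₀ : Type u)) := δ₀
    have hδ' : δ ∘ₗ f = β ∘ₗ f - ζ ∘ₗ f' := hδ
    refine ⟨p ∘ₗ ζ + (p ∘ₗ δ) ∘ₗ pp₀.π, ?_⟩
    show (p ∘ₗ ζ + (p ∘ₗ δ) ∘ₗ pp₀.π) ∘ₗ σ₁ = φn
    apply LinearMap.ext
    rintro ⟨a, b⟩
    have e1 : ζ (pp₀.σ a) = φ' (a, 0) := LinearMap.congr_fun hζ' a
    have e2 : δ (f b) = β (f b) - ζ (f' b) := LinearMap.congr_fun hδ' b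
    have e3 : β (f b) = φ' (0, b) := LinearMap.congr_fun hβ' b
    have e4 : pp₀.π (f' b) = f b := LinearMap.congr_fun hf' b
    have e5 : p (φ' (a, b)) = φn (a, b) := LinearMap.congr_fun hφ' (a, b)
    have e6 : φ' (a, b) = φ' (a, 0) + φ' (0, b) := by
      rw [← map_add]
      congr 1
      simp [Prod.ext_iff]
    have c1 : pp₀.π (pp₀.σ a + f' b) = f b := by rw [map_add, hπσ, e4, zero_add]
    have c2 : ζ (pp₀.σ a + f' b) = φ' (a, 0) + ζ (f' b) := by rw [map_add, e1]
    simp only [σ₁, LinearMap.comp_apply, LinearMap.add_apply, LinearMap.coprod_apply]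
    rw [c1, c2, e2, e3, ← e5, e6]
    simp only [map_add, map_sub]
    abel
  -- Gen T₀ ⊆ D(σ₀)
  have hD₀ : ∀ X : ModuleCat.{u} A, GenM T₀ X → Dclass pp₀.σ X := by
    rintro X ⟨κ, p, hp⟩
    exact dclass_quot pp₀.σ hP p hp (hpre κ)
  -- Gen T = Gen T₀
  have hGT : ∀ X : ModuleCat.{u} A, GenM TT X ↔ GenM T₀ X := by
    intro X
    constructor
    · rintro ⟨ι, p, hp⟩
      let s : ((Prod ι Bool) →₀ (T₀ : Type u)) →ₗ[A] (ι →₀ Prod (T₀ : Type u) (T₁ : Type u)) :=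
        Finsupp.lsum ℕ fun ib => (Finsupp.lsingle ib.1) ∘ₗ
          (if ib.2 then LinearMap.inl A (T₀ : Type u) (T₁ : Type u)
            else (LinearMap.inr A (T₀ : Type u) (T₁ : Type u)) ∘ₗ g)
      have hs : ∀ y : ι →₀ Prod (T₀ : Type u) (T₁ : Type u), y ∈ LinearMap.range s := by
        intro y
        induction y using Finsupp.induction_linear with
        | zero => exact zero_mem _
        | add a b ha hb => exact add_mem ha hb
        | single i tu =>
          obtain ⟨t, u⟩ := tu
          obtain ⟨t', ht'⟩ := hg u
          refine ⟨Finsupp.single (i, true) t + Finsupp.single (i, false) t', ?_⟩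
          have hs1 : s (Finsupp.single (i, true) t)
              = Finsupp.single i ((t, 0) : Prod (T₀ : Type u) (T₁ : Type u)) := by
            simp [s]
          have hs2 : s (Finsupp.single (i, false) t')
              = Finsupp.single i ((0, g t') : Prod (T₀ : Type u) (T₁ : Type u)) := by
            simp [s]
          rw [map_add, hs1, hs2, ← Finsupp.single_add, ht']
          congr 1
          simp [Prod.ext_iff]
      refine ⟨Prod ι Bool, p ∘ₗ s, ?_⟩
      intro x
      obtain ⟨y, hy⟩ := hp x
      obtain ⟨z, hz⟩ := hs y
      refine ⟨z, ?_⟩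
      have : p (s z) = x := by rw [hz]; exact hy
      exact this
    · rintro ⟨κ, p, hp⟩
      let m : (κ →₀ Prod (T₀ : Type u) (T₁ : Type u)) →ₗ[A] (κ →₀ (T₀ : Type u)) :=
        Finsupp.lsum ℕ fun k => (Finsupp.lsingle k) ∘ₗ LinearMap.fst A (T₀ : Type u) (T₁ : Type u)
      have hm : ∀ y : κ →₀ (T₀ : Type u), y ∈ LinearMap.range m := by
        intro y
        induction y using Finsupp.induction_linear with
        | zero => exact zero_mem _
        | add a b ha hb => exact add_mem ha hb
        | single k t => exact ⟨Finsupp.single k (t, 0), by simp [m]⟩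
      refine ⟨κ, p ∘ₗ m, ?_⟩
      intro x
      obtain ⟨y, hy⟩ := hp x
      obtain ⟨z, hz⟩ := hm y
      refine ⟨z, ?_⟩
      have : p (m z) = x := by rw [hz]; exact hy
      exact this
  -- exactness of σ₁ against π₁
  have hexact₁ : LinearMap.range σ₁ = LinearMap.ker π₁ := by
    apply le_antisymm
    · rintro q ⟨⟨a, b⟩, rfl⟩
      show g (pp₀.π (σ₁ (a, b))) = 0
      have hb : f b ∈ LinearMap.ker g := hexact ▸ LinearMap.mem_range_self _ b
      have e4 : pp₀.π (f' b) = f b := LinearMap.congr_fun hf' b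
      simp only [σ₁, LinearMap.coprod_apply, map_add, hπσ, zero_add, e4]
      exact hb
    · intro q hq
      have hq' : g (pp₀.π q) = 0 := hq
      have : pp₀.π q ∈ LinearMap.range f := by rw [hexact]; exact hq'
      obtain ⟨b, hb⟩ := this
      have e4 : pp₀.π (f' b) = f b := LinearMap.congr_fun hf' b
      have : q - f' b ∈ LinearMap.range pp₀.σ := by
        rw [pp₀.exact]
        show pp₀.π (q - f' b) = 0
        rw [map_sub, e4, hb, sub_self]
      obtain ⟨a, ha⟩ := this
      refine ⟨(a, b), ?_⟩
      show pp₀.σ a + f' b = q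
      rw [ha]
      abel
  have hπ₁surj : Function.Surjective π₁ := by
    intro t
    obtain ⟨s, hs⟩ := hg t
    obtain ⟨q, hq⟩ := pp₀.surj s
    exact ⟨q, by simp [π₁, hq, hs]⟩
  -- the projective presentation of T₁
  let pp₁ : ProjPres T₁ :=
    { P := P₁
      Q := pp₀.Q
      σ := σ₁
      π := π₁
      projP := hP₁proj
      projQ := pp₀.projQ
      exact := hexact₁
      surj := hπ₁surj }
  have hD₁eq : @Dclass A _ P₁ pp₀.Q σ₁ = GenM T₀ := funext fun X => propext ⟨h1 X, h2 X⟩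
  -- the big presentation of T = T₀ ⊕ T₁
  set Pbig : ModuleCat.{u} A := ModuleCat.of A
    (Prod (pp₀.P : Type u) (Prod (pp₀.P : Type u) (ModuleCat.of A A : Type u))) with hPbig
  set Qbig : ModuleCat.{u} A := ModuleCat.of A (Prod (pp₀.Q : Type u) (pp₀.Q : Type u)) with hQbig
  let σbig := pp₀.σ.prodMap σ₁
  let πbig := pp₀.π.prodMap π₁
  have hbigexact : LinearMap.range σbig = LinearMap.ker πbig := by
    show LinearMap.range (pp₀.σ.prodMap σ₁) = LinearMap.ker (pp₀.π.prodMap π₁)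
    rw [range_prodMap', LinearMap.ker_prodMap, pp₀.exact, hexact₁]
  have hbigsurj : Function.Surjective (pp₀.π.prodMap π₁) := by
    rintro ⟨t, u⟩
    obtain ⟨q1, hq1⟩ := pp₀.surj t
    obtain ⟨q2, hq2⟩ := hπ₁surj u
    exact ⟨(q1, q2), by simp [hq1, hq2, Prod.ext_iff]⟩
  let pp : ProjPres TT :=
    { P := Pbig
      Q := Qbig
      σ := σbig
      π := πbig
      projP := inferInstanceAs (Module.Projective A
        (Prod (pp₀.P : Type u) (Prod (pp₀.P : Type u) (ModuleCat.of A A : Type u))))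
      projQ := inferInstanceAs (Module.Projective A (Prod (pp₀.Q : Type u) (pp₀.Q : Type u)))
      exact := hbigexact
      surj := hbigsurj }
  -- D(σbig) = Gen T
  have hDeq : @Dclass A _ Pbig Qbig σbig = GenM TT := by
    funext X
    apply propext
    constructor
    · intro hX
      refine (hGT X).2 (h1 X ?_)
      intro φ
      let φn : Prod (pp₀.P : Type u) (ModuleCat.of A A : Type u) →ₗ[A] (X : Type u) := φ
      obtain ⟨η, hη⟩ := hX (φn ∘ₗ LinearMap.snd A (pp₀.P : Type u)
        (Prod (pp₀.P : Type u) (ModuleCat.of A A : Type u)))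
      let η' : Prod (pp₀.Q : Type u) (pp₀.Q : Type u) →ₗ[A] (X : Type u) := η
      have hηp : ∀ z, η' (σbig z) = φn z.2 := fun z => LinearMap.congr_fun hη z
      refine ⟨η' ∘ₗ LinearMap.inr A (pp₀.Q : Type u) (pp₀.Q : Type u), ?_⟩
      show (η' ∘ₗ LinearMap.inr A (pp₀.Q : Type u) (pp₀.Q : Type u)) ∘ₗ σ₁ = φn
      apply LinearMap.ext
      intro x
      show η' ((LinearMap.inr A (pp₀.Q : Type u) (pp₀.Q : Type u)) (σ₁ x)) = φn x
      have hz : (LinearMap.inr A (pp₀.Q : Type u) (pp₀.Q : Type u)) (σ₁ x)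
          = σbig ((0 : (pp₀.P : Type u)), x) := by
        simp [σbig]
      rw [hz]
      exact hηp ((0 : (pp₀.P : Type u)), x)
    · intro hX
      have hX₀ := (hGT X).1 hX
      intro φ
      let φn : Prod (pp₀.P : Type u) (Prod (pp₀.P : Type u) (ModuleCat.of A A : Type u))
        →ₗ[A] (X : Type u) := φ
      obtain ⟨η₁, hη₁⟩ := hD₀ X hX₀ (φn ∘ₗ LinearMap.inl A (pp₀.P : Type u)
        (Prod (pp₀.P : Type u) (ModuleCat.of A A : Type u)))
      obtain ⟨η₂, hη₂⟩ := h2 X hX₀ (φn ∘ₗ LinearMap.inr A (pp₀.P : Type u)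
        (Prod (pp₀.P : Type u) (ModuleCat.of A A : Type u)))
      have hη₁' : η₁ ∘ₗ pp₀.σ = φn ∘ₗ LinearMap.inl A (pp₀.P : Type u)
        (Prod (pp₀.P : Type u) (ModuleCat.of A A : Type u)) := hη₁
      have hη₂' : η₂ ∘ₗ σ₁ = φn ∘ₗ LinearMap.inr A (pp₀.P : Type u)
        (Prod (pp₀.P : Type u) (ModuleCat.of A A : Type u)) := hη₂
      refine ⟨η₁.coprod η₂, ?_⟩
      show (η₁.coprod η₂) ∘ₗ σbig = φn
      apply LinearMap.ext
      rintro ⟨a, b⟩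
      have k1 := LinearMap.congr_fun hη₁' a
      have k2 := LinearMap.congr_fun hη₂' b
      simp only [LinearMap.comp_apply, LinearMap.inl_apply, LinearMap.inr_apply] at k1 k2
      show (η₁.coprod η₂) (σbig (a, b)) = φn (a, b)
      simp only [σbig, LinearMap.prodMap_apply, LinearMap.coprod_apply, k1, k2]
      rw [← map_add]
      congr 1
      simp [Prod.ext_iff]
  refine ⟨⟨pp, hDeq⟩, funext fun X => propext (hGT X), pp₁, ⟨?_, ?_⟩, ?_⟩
  · show IsTorsionClass (@Dclass A _ P₁ pp₀.Q σ₁)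
    rw [hD₁eq]
    refine ⟨?_, ?_, ?_, ?_⟩
    · intro M N e hM
      exact genM_quot e.toLinearMap e.surjective hM
    · intro M N q hq hM
      exact genM_quot q hq hM
    · intro X Y Z i q hi hq hex hX hZ
      rw [← hD₁eq] at hX hZ ⊢
      exact @dclass_ext A _ P₁ pp₀.Q σ₁ hQ X Y Z i q hi hq hex hX hZ
    · exact genM_sums T₀
  · show @Dclass A _ P₁ pp₀.Q σ₁ T₁
    exact h2 T₁ (genM_of_surj g hg)
  · show @Dclass A _ P₁ pp₀.Q σ₁ = GenM TT
    rw [hD₁eq]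
    exact funext fun X => propext ((hGT X).symm)
end

section
/- Let A be a ring and let T be a silting right A-module such that every module in Add T admits a minimal projective presentation. Then for every exact sequence A →f→ T₀ → T₁ → 0 with T₀ and T₁ in Add T and f a left Add T-approximation of A, the module T₁ is partial silting with respect to some projective presentation σ₁ satisfying 𝒟_{σ₁} = Gen T. -/
universe u

open DirectSum

namespace Stmt6Aux
-- H1
variable {A : Type u} [Ring A]

/-- Lifting property along a surjection, for a fixed source. -/
def HasLifting (P : Type u) [AddCommGroup P] [Module A P] : Prop :=
  ∀ {M N : Type u} [AddCommGroup M] [AddCommGroup N] [Module A M] [Module A N]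
    (f : M →ₗ[A] N) (g : P →ₗ[A] N), Function.Surjective f → ∃ h : P →ₗ[A] M, f ∘ₗ h = g

lemma hasLifting_of_projective {P : Type u} [AddCommGroup P] [Module A P]
    (hP : Module.Projective A P) : HasLifting (A := A) P := by
  intro M N _ _ _ _ f g hf
  exact Module.projective_lifting_property f g hf

lemma hasLifting_finsupp {Q : Type u} [AddCommGroup Q] [Module A Q]
    (hQ : Module.Projective A Q) (I : Type u) : HasLifting (A := A) (I →₀ Q) := by
  intro M N _ _ _ _ f g hf
  choose h hh using fun i => Module.projective_lifting_property f (g ∘ₗ Finsupp.lsingle i) hf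
  refine ⟨Finsupp.lsum ℕ h, Finsupp.lhom_ext fun i q => ?_⟩
  have := LinearMap.congr_fun (hh i) q
  simpa using this

lemma lift_of_range_le {M N P : Type u} [AddCommGroup M] [AddCommGroup N] [AddCommGroup P]
    [Module A M] [Module A N] [Module A P] (hP : HasLifting (A := A) P)
    (f : M →ₗ[A] N) (g : P →ₗ[A] N) (h : ∀ x, g x ∈ LinearMap.range f) :
    ∃ h' : P →ₗ[A] M, f ∘ₗ h' = g := by
  obtain ⟨h', hh⟩ := hP f.rangeRestrict (g.codRestrict (LinearMap.range f) h)
    f.surjective_rangeRestrict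
  refine ⟨h', ?_⟩
  ext x
  have := congrArg Subtype.val (LinearMap.congr_fun hh x)
  simpa using this

lemma factor_through_surjective {M N X : Type u} [AddCommGroup M] [AddCommGroup N]
    [AddCommGroup X] [Module A M] [Module A N] [Module A X]
    (π : M →ₗ[A] N) (hπ : Function.Surjective π) (η : M →ₗ[A] X)
    (h : LinearMap.ker π ≤ LinearMap.ker η) : ∃ v : N →ₗ[A] X, v ∘ₗ π = η := by
  refine ⟨(LinearMap.ker π).liftQ η h ∘ₗ (π.quotKerEquivOfSurjective hπ).symm.toLinearMap, ?_⟩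
  ext m
  have key : (π.quotKerEquivOfSurjective hπ).symm (π m) = Submodule.Quotient.mk m := by
    apply (π.quotKerEquivOfSurjective hπ).injective
    rw [LinearEquiv.apply_symm_apply]
    simp [LinearMap.quotKerEquivOfSurjective]
  simp [key]


variable {P Q N : Type u} [AddCommGroup P] [AddCommGroup Q] [AddCommGroup N]
  [Module A P] [Module A Q] [Module A N]

lemma mapRange_surjective {I : Type u} (f : P →ₗ[A] Q) (hf : Function.Surjective f) :
    Function.Surjective (Finsupp.mapRange.linearMap (α := I) f) := by
  intro w
  induction w using Finsupp.induction with
  | zero => exact ⟨0, map_zero _⟩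
  | single_add a b v ha hb ih =>
    obtain ⟨u, hu⟩ := ih
    obtain ⟨m, hm⟩ := hf b
    refine ⟨Finsupp.single a m + u, ?_⟩
    rw [map_add, hu]
    congr 1
    simp [hm]

lemma mapRange_ker_le_range {I : Type u} (σ : P →ₗ[A] Q) (π : Q →ₗ[A] N)
    (hex : LinearMap.range σ = LinearMap.ker π) :
    ∀ w : I →₀ Q, Finsupp.mapRange.linearMap π w = 0 →
      w ∈ LinearMap.range (Finsupp.mapRange.linearMap (α := I) σ) := by
  intro w
  induction w using Finsupp.induction with
  | zero => intro _; exact ⟨0, map_zero _⟩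
  | single_add a b v ha hb ih =>
    intro hw
    rw [map_add] at hw
    have hva : v a = 0 := Finsupp.notMem_support_iff.1 ha
    have hπb : π b = 0 := by
      have := congrArg (fun z => z a) hw
      simpa [hva] using this
    have hv0 : Finsupp.mapRange.linearMap π v = 0 := by
      have : Finsupp.single a (π b) = 0 := by simp [hπb]
      simpa [this] using hw
    obtain ⟨u, hu⟩ := ih hv0
    have hb' : b ∈ LinearMap.range σ := by rw [hex]; exact hπb
    obtain ⟨p, hp⟩ := hb'
    refine ⟨Finsupp.single a p + u, ?_⟩
    rw [map_add, hu]
    congr 1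
    simp [hp]

lemma mapRange_range_le_ker {I : Type u} (σ : P →ₗ[A] Q) (π : Q →ₗ[A] N)
    (hex : LinearMap.range σ = LinearMap.ker π) (w : I →₀ P) :
    Finsupp.mapRange.linearMap π (Finsupp.mapRange.linearMap (α := I) σ w) = 0 := by
  have hπσ : ∀ p, π (σ p) = 0 := by
    intro p
    have : σ p ∈ LinearMap.ker π := by rw [← hex]; exact ⟨p, rfl⟩
    exact this
  rw [← LinearMap.comp_apply]
  have : (Finsupp.mapRange.linearMap (α := I) π) ∘ₗ (Finsupp.mapRange.linearMap (α := I) σ) = 0 :=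
    Finsupp.lhom_ext fun i p => by simp [hπσ]
  rw [this]; rfl


section MainAux
variable {A : Type u} [Ring A]

lemma dclass_finsupp {P Q : ModuleCat.{u} A} (σ : (P : Type u) →ₗ[A] Q) {X : ModuleCat.{u} A}
    (hX : Dclass σ X) (I : Type u) (φ : (I →₀ (P : Type u)) →ₗ[A] X) :
    ∃ η : (I →₀ (Q : Type u)) →ₗ[A] X,
      η ∘ₗ Finsupp.mapRange.linearMap σ = φ := by
  choose η hη using fun i => hX (φ ∘ₗ Finsupp.lsingle i)
  refine ⟨Finsupp.lsum ℕ η, Finsupp.lhom_ext fun i p => ?_⟩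
  have := LinearMap.congr_fun (hη i) p
  simpa using this

lemma dclass_extensions {P Q : ModuleCat.{u} A} (σ : (P : Type u) →ₗ[A] Q)
    (hP : Module.Projective A (P : Type u)) (hQ : Module.Projective A (Q : Type u)) :
    ClosedUnderExtensions (Dclass σ) := by
  intro X Y Z f g hf hg hfg hX hZ φ
  obtain ⟨ζ, hζ⟩ := hZ (g ∘ₗ φ)
  obtain ⟨η, hη⟩ := Module.projective_lifting_property g ζ hg
  have hrange : ∀ p, (φ - η ∘ₗ σ) p ∈ LinearMap.range f := by
    intro p
    rw [hfg, LinearMap.mem_ker]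
    have h1 := LinearMap.congr_fun hζ p
    have h2 := LinearMap.congr_fun hη (σ p)
    simp only [LinearMap.comp_apply] at h1 h2
    simp only [LinearMap.sub_apply, LinearMap.comp_apply, map_sub, h2, h1, sub_self]
  obtain ⟨θ, hθ⟩ := lift_of_range_le (hasLifting_of_projective hP) f (φ - η ∘ₗ σ) hrange
  obtain ⟨θ', hθ'⟩ := hX θ
  refine ⟨η + f ∘ₗ θ', ?_⟩
  ext p
  have h3 := LinearMap.congr_fun hθ' p
  have h4 := LinearMap.congr_fun hθ p
  simp only [LinearMap.comp_apply] at h3 h4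
  simp only [LinearMap.add_apply, LinearMap.comp_apply, h3, h4]
  simp only [LinearMap.sub_apply, LinearMap.comp_apply]
  abel

lemma genM_iso (T : ModuleCat.{u} A) : IsoClosed (GenM T) := by
  intro M N e hM
  obtain ⟨ι, q, hq⟩ := hM
  exact ⟨ι, e.toLinearMap ∘ₗ q, by simpa using e.surjective.comp hq⟩

lemma genM_quot (T : ModuleCat.{u} A) : ClosedUnderQuotients (GenM T) := by
  intro M N f hf hM
  obtain ⟨ι, q, hq⟩ := hM
  exact ⟨ι, f ∘ₗ q, by simpa using hf.comp hq⟩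

lemma genM_sums (T : ModuleCat.{u} A) : ClosedUnderDirectSums (GenM T) := by
  classical
  intro ι M hM
  choose κ p hp using hM
  refine ⟨(Σ i, κ i), Finsupp.lsum ℕ (fun s : Σ i, κ i =>
    (DirectSum.lof A ι (fun i => (M i : Type u)) s.1) ∘ₗ p s.1 ∘ₗ Finsupp.lsingle s.2),
    fun y => ?_⟩
  induction y using DirectSum.induction_on with
  | zero => exact ⟨0, map_zero _⟩
  | of i m =>
    obtain ⟨w, hw⟩ := hp i m
    refine ⟨Finsupp.lmapDomain (T : Type u) A (fun j => (⟨i, j⟩ : Σ i, κ i)) w, ?_⟩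
    have hcomp : (Finsupp.lsum ℕ (fun s : Σ i, κ i =>
        (DirectSum.lof A ι (fun i => (M i : Type u)) s.1) ∘ₗ p s.1 ∘ₗ Finsupp.lsingle s.2)) ∘ₗ
        Finsupp.lmapDomain (T : Type u) A (fun j => (⟨i, j⟩ : Σ i, κ i)) =
        (DirectSum.lof A ι (fun i => (M i : Type u)) i) ∘ₗ p i :=
      Finsupp.lhom_ext fun j t => by
        simp [Finsupp.lmapDomain_apply, Finsupp.mapDomain_single]
    have := LinearMap.congr_fun hcomp w
    simp only [LinearMap.comp_apply] at this
    rw [hw, DirectSum.lof_eq_of] at this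
    exact this
  | add x y hx hy =>
    obtain ⟨wx, hwx⟩ := hx
    obtain ⟨wy, hwy⟩ := hy
    exact ⟨wx + wy, by rw [map_add, hwx, hwy]⟩

lemma genM_of_forall_mem_range {T X T₀ : ModuleCat.{u} A} (hT₀ : memAdd T T₀)
    (h : ∀ x : X, ∃ v : (T₀ : Type u) →ₗ[A] X, x ∈ LinearMap.range v) : GenM T X := by
  classical
  obtain ⟨κ, i, r, hri⟩ := hT₀
  have hrsurj : Function.Surjective r := fun t =>
    ⟨i t, by have := LinearMap.congr_fun hri t; simpa using this⟩
  choose v hv using h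
  refine ⟨Prod (X : Type u) κ, Finsupp.lsum ℕ (fun s : Prod (X : Type u) κ =>
    v s.1 ∘ₗ r ∘ₗ Finsupp.lsingle s.2), fun x => ?_⟩
  obtain ⟨t₀, ht₀⟩ := hv x
  obtain ⟨w, hw⟩ := hrsurj t₀
  refine ⟨Finsupp.lmapDomain (T : Type u) A (fun j => ((x, j) : Prod (X : Type u) κ)) w, ?_⟩
  have hcomp : (Finsupp.lsum ℕ (fun s : Prod (X : Type u) κ =>
      v s.1 ∘ₗ r ∘ₗ Finsupp.lsingle s.2)) ∘ₗ
      Finsupp.lmapDomain (T : Type u) A (fun j => ((x, j) : Prod (X : Type u) κ)) =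
      v x ∘ₗ r := Finsupp.lhom_ext fun j t => by
    simp [Finsupp.lmapDomain_apply, Finsupp.mapDomain_single]
  have := LinearMap.congr_fun hcomp w
  simp only [LinearMap.comp_apply] at this
  rw [this, hw, ht₀]

end MainAux

section LemmaA
variable {A : Type u} [Ring A]

/-- If `c : M → M` is surjective with kernel contained in a superfluous submodule,
and `M` is projective, then `c` is injective. -/
lemma injective_of_ker_le_superfluous {M : ModuleCat.{u} A} (hMproj : Module.Projective A M)
    (c : (M : Type u) →ₗ[A] M) (hcsurj : Function.Surjective c) (N : Submodule A M)
    (hN : IsSuperfluous N) (hker : LinearMap.ker c ≤ N) : Function.Injective c := by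
  obtain ⟨t, ht⟩ := Module.projective_lifting_property c LinearMap.id hcsurj
  have htsurj : Function.Surjective t := by
    have hsup : LinearMap.range t ⊔ N = ⊤ := by
      rw [eq_top_iff]
      intro q _
      have h1 : q - t (c q) ∈ LinearMap.ker c := by
        rw [LinearMap.mem_ker, map_sub]
        have := LinearMap.congr_fun ht (c q)
        simp only [LinearMap.comp_apply, LinearMap.id_apply] at this
        rw [this, sub_self]
      have hq : q = t (c q) + (q - t (c q)) := by abel
      rw [hq]
      exact Submodule.add_mem_sup ⟨c q, rfl⟩ (hker h1)
    have := hN _ hsup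
    rwa [← LinearMap.range_eq_top]
  intro x y hxy
  obtain ⟨x', rfl⟩ := htsurj x
  obtain ⟨y', rfl⟩ := htsurj y
  have h1 := LinearMap.congr_fun ht x'
  have h2 := LinearMap.congr_fun ht y'
  simp only [LinearMap.comp_apply, LinearMap.id_apply] at h1 h2
  rw [h1, h2] at hxy
  rw [hxy]

lemma dclass_min_of_genM (T : ModuleCat.{u} A) (pp : ProjPres T)
    (hD : Dclass pp.σ = GenM T) {T₀ : ModuleCat.{u} A} (hT₀ : memAdd T T₀)
    (pp₀ : ProjPres T₀) (hm : IsMinimalPres pp₀)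
    {X : ModuleCat.{u} A} (hX : GenM T X) : Dclass pp₀.σ X := by
  classical
  obtain ⟨I, i, r, hri⟩ := hT₀
  have hXD : Dclass pp.σ X := by rw [hD]; exact hX
  have hπIsurj : Function.Surjective (Finsupp.mapRange.linearMap (α := I) pp.π) :=
    mapRange_surjective pp.π pp.surj
  have hπσ₀ : ∀ p, pp₀.π (pp₀.σ p) = 0 := fun p => by
    have : pp₀.σ p ∈ LinearMap.ker pp₀.π := by rw [← pp₀.exact]; exact ⟨p, rfl⟩
    exact this
  obtain ⟨a, ha⟩ := hasLifting_of_projective pp₀.projQ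
    (Finsupp.mapRange.linearMap (α := I) pp.π) (i ∘ₗ pp₀.π) hπIsurj
  obtain ⟨a', ha'⟩ := lift_of_range_le (hasLifting_of_projective pp₀.projP)
    (Finsupp.mapRange.linearMap (α := I) pp.σ) (a ∘ₗ pp₀.σ) (fun p => by
      apply mapRange_ker_le_range pp.σ pp.π pp.exact
      have h1 := LinearMap.congr_fun ha (pp₀.σ p)
      simp only [LinearMap.comp_apply] at h1 ⊢
      rw [h1, hπσ₀ p, map_zero])
  obtain ⟨b, hb⟩ := hasLifting_finsupp pp.projQ I pp₀.π
    (r ∘ₗ Finsupp.mapRange.linearMap (α := I) pp.π) pp₀.surj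
  obtain ⟨b', hb'⟩ := lift_of_range_le (hasLifting_finsupp pp.projP I) pp₀.σ
    (b ∘ₗ Finsupp.mapRange.linearMap (α := I) pp.σ) (fun w => by
      rw [pp₀.exact, LinearMap.mem_ker]
      have h1 := LinearMap.congr_fun hb (Finsupp.mapRange.linearMap (α := I) pp.σ w)
      simp only [LinearMap.comp_apply] at h1 ⊢
      rw [h1, mapRange_range_le_ker pp.σ pp.π pp.exact w, map_zero])
  have hπc : ∀ q, pp₀.π (b (a q)) = pp₀.π q := fun q => by
    have h1 := LinearMap.congr_fun hb (a q)
    have h2 := LinearMap.congr_fun ha q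
    have h3 := LinearMap.congr_fun hri (pp₀.π q)
    simp only [LinearMap.comp_apply] at h1 h2 h3
    rw [h1, h2]
    simpa using h3
  have hσc : ∀ p, pp₀.σ (b' (a' p)) = b (a (pp₀.σ p)) := fun p => by
    have h1 := LinearMap.congr_fun hb' (a' p)
    have h2 := LinearMap.congr_fun ha' p
    simp only [LinearMap.comp_apply] at h1 h2
    rw [h1, h2]
  have hkerπ : ∀ q, pp₀.π q = 0 → q ∈ LinearMap.range pp₀.σ := fun q hq => by
    rw [pp₀.exact]; exact hq
  -- c := b ∘ a is surjective
  have hcsurj : Function.Surjective (b ∘ₗ a) := by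
    have hsup : LinearMap.range (b ∘ₗ a) ⊔ LinearMap.ker pp₀.π = ⊤ := by
      rw [eq_top_iff]
      intro q _
      have hmem : q - (b ∘ₗ a) q ∈ LinearMap.ker pp₀.π := by
        rw [LinearMap.mem_ker, map_sub]
        simp only [LinearMap.comp_apply]
        rw [hπc q, sub_self]
      have hq : q = (b ∘ₗ a) q + (q - (b ∘ₗ a) q) := by abel
      rw [hq]
      exact Submodule.add_mem_sup ⟨q, rfl⟩ hmem
    have := hm.1 _ hsup
    rwa [← LinearMap.range_eq_top]
  have hcinj : Function.Injective (b ∘ₗ a) :=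
    injective_of_ker_le_superfluous pp₀.projQ (b ∘ₗ a) hcsurj _ hm.1 (fun q hq => by
      rw [LinearMap.mem_ker] at hq ⊢
      simp only [LinearMap.comp_apply] at hq
      rw [← hπc q, hq, map_zero])
  -- c' := b' ∘ a' is surjective
  have hc'surj : Function.Surjective (b' ∘ₗ a') := by
    have hsup : LinearMap.range (b' ∘ₗ a') ⊔ LinearMap.ker pp₀.σ = ⊤ := by
      rw [eq_top_iff]
      intro p _
      obtain ⟨q, hq⟩ := hcsurj (pp₀.σ p)
      simp only [LinearMap.comp_apply] at hq
      have hqker : pp₀.π q = 0 := by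
        rw [← hπc q, hq]
        exact hπσ₀ p
      obtain ⟨p'', hp''⟩ := hkerπ q hqker
      have hσeq : pp₀.σ ((b' ∘ₗ a') p'') = pp₀.σ p := by
        simp only [LinearMap.comp_apply]
        rw [hσc p'', hp'', hq]
      have hmem : p - (b' ∘ₗ a') p'' ∈ LinearMap.ker pp₀.σ := by
        rw [LinearMap.mem_ker, map_sub, hσeq, sub_self]
      have hp : p = (b' ∘ₗ a') p'' + (p - (b' ∘ₗ a') p'') := by abel
      rw [hp]
      exact Submodule.add_mem_sup ⟨p'', rfl⟩ hmem
    have := hm.2 _ hsup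
    rwa [← LinearMap.range_eq_top]
  have hc'inj : Function.Injective (b' ∘ₗ a') :=
    injective_of_ker_le_superfluous pp₀.projP (b' ∘ₗ a') hc'surj _ hm.2 (fun p hp => by
      rw [LinearMap.mem_ker] at hp ⊢
      simp only [LinearMap.comp_apply] at hp
      apply hcinj
      have := hσc p
      simp only [LinearMap.comp_apply] at this ⊢
      rw [← this, hp]
      simp)
  -- conclude
  intro φ
  let e' := LinearEquiv.ofBijective (b' ∘ₗ a') ⟨hc'inj, hc'surj⟩
  obtain ⟨ζ, hζ⟩ := dclass_finsupp pp.σ hXD I ((φ ∘ₗ e'.symm.toLinearMap) ∘ₗ b')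
  refine ⟨ζ ∘ₗ a, ?_⟩
  ext p
  have h1 := LinearMap.congr_fun ha' p
  have h2 := LinearMap.congr_fun hζ (a' p)
  simp only [LinearMap.comp_apply, LinearEquiv.coe_coe] at h1 h2 ⊢
  rw [← h1, h2]
  have h3 : e'.symm (b' (a' p)) = p := by
    have he : b' (a' p) = e' p := rfl
    rw [he, LinearEquiv.symm_apply_apply]
  rw [h3]

end LemmaA

end Stmt6Aux

/-- If `T` is silting and every module in `Add T` admits a minimal projective
presentation, then in every exact sequence `A →f→ T₀ → T₁ → 0` with `T₀, T₁ ∈ Add T` and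
`f` a left `Add T`-approximation, `T₁` is partial silting w.r.t. a presentation `σ₁` with
`𝒟_{σ₁} = Gen T`. -/
theorem stmt6 {A : Type u} [Ring A] (T : ModuleCat.{u} A) (hT : IsSilting T)
    (hmin : ∀ X : ModuleCat.{u} A, memAdd T X → ∃ pp : ProjPres X, IsMinimalPres pp)
    (T₀ T₁ : ModuleCat.{u} A) (hT₀ : memAdd T T₀) (hT₁ : memAdd T T₁)
    (f : ModuleCat.of A A →ₗ[A] T₀) (g : T₀ →ₗ[A] T₁)
    (hg : Function.Surjective g) (hexact : LinearMap.range f = LinearMap.ker g)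
    (happrox : IsLeftAddApprox T f) :
    ∃ pp₁ : ProjPres T₁, IsPartialSiltingWrt pp₁ ∧ Dclass pp₁.σ = GenM T := by
  classical
  obtain ⟨pp, hD⟩ := hT
  obtain ⟨pp₀, hm⟩ := hmin T₀ hT₀
  haveI := pp₀.projP
  haveI := pp₀.projQ
  obtain ⟨q₀, hq₀⟩ := pp₀.surj (f (1 : A))
  set lft : (ModuleCat.of A A : Type u) →ₗ[A] (pp₀.Q : Type u) :=
    LinearMap.toSpanSingleton A (pp₀.Q : Type u) q₀ with hlftdef
  have hlft : ∀ aa : A, pp₀.π (lft aa) = f aa := by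
    intro aa
    have h1 : lft aa = aa • q₀ := rfl
    have h2 : f aa = aa • f (1 : A) := by
      conv_lhs => rw [show aa = aa • (1 : A) by simp [smul_eq_mul]]
      rw [map_smul]
    rw [h1, map_smul, hq₀, h2]
  have hπσ₀ : ∀ p, pp₀.π (pp₀.σ p) = 0 := fun p => by
    have : pp₀.σ p ∈ LinearMap.ker pp₀.π := by rw [← pp₀.exact]; exact ⟨p, rfl⟩
    exact this
  have hexact₁ : LinearMap.range (LinearMap.coprod pp₀.σ lft) =
      LinearMap.ker (g ∘ₗ pp₀.π) := by
    apply le_antisymm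
    · rw [LinearMap.range_coprod, sup_le_iff]
      constructor
      · rintro x ⟨p, rfl⟩
        rw [LinearMap.mem_ker, LinearMap.comp_apply, hπσ₀ p, map_zero]
      · rintro x ⟨aa, rfl⟩
        rw [LinearMap.mem_ker, LinearMap.comp_apply, hlft aa]
        have : f aa ∈ LinearMap.ker g := by rw [← hexact]; exact ⟨aa, rfl⟩
        exact this
    · intro x hx
      rw [LinearMap.mem_ker, LinearMap.comp_apply] at hx
      have hmem : pp₀.π x ∈ LinearMap.range f := by rw [hexact]; exact hx
      obtain ⟨aa, haa⟩ := hmem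
      have hker : x - lft aa ∈ LinearMap.ker pp₀.π := by
        rw [LinearMap.mem_ker, map_sub, hlft aa, haa, sub_self]
      rw [← pp₀.exact] at hker
      obtain ⟨p, hp⟩ := hker
      refine ⟨(p, aa), ?_⟩
      rw [LinearMap.coprod_apply, hp]
      abel
  have hgenT₁ : GenM T T₁ := by
    obtain ⟨κ₁, i₁, r₁, h₁⟩ := hT₁
    exact ⟨κ₁, r₁, fun t => ⟨i₁ t, by have := LinearMap.congr_fun h₁ t; simpa using this⟩⟩
  -- the key computation of the D-class of the new presentation
  have hD₁ : Dclass (P := ModuleCat.of A (Prod (pp₀.P : Type u) A)) (Q := pp₀.Q)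
      (LinearMap.coprod pp₀.σ lft) = GenM T := by
    funext X
    apply propext
    constructor
    · intro hXD
      apply Stmt6Aux.genM_of_forall_mem_range hT₀
      intro x
      obtain ⟨η, hη⟩ := hXD (LinearMap.coprod (0 : (pp₀.P : Type u) →ₗ[A] X)
        (LinearMap.toSpanSingleton A (X : Type u) x))
      replace hη : η ∘ₗ pp₀.σ.coprod lft =
          LinearMap.coprod (0 : (pp₀.P : Type u) →ₗ[A] X)
            (LinearMap.toSpanSingleton A (X : Type u) x) := hη
      have hη0 : ∀ p : (pp₀.P : Type u), η (pp₀.σ p) = 0 := fun p => by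
        have h3 : η (pp₀.σ p + lft 0) = (0 : (pp₀.P : Type u) →ₗ[A] X) p
            + LinearMap.toSpanSingleton A (X : Type u) x 0 := LinearMap.congr_fun hη (p, 0)
        rw [map_zero, add_zero, LinearMap.zero_apply, map_zero, add_zero] at h3
        exact h3
      have h2 : η (pp₀.σ 0 + lft (1 : A)) = (0 : (pp₀.P : Type u) →ₗ[A] X) 0
          + LinearMap.toSpanSingleton A (X : Type u) x (1 : A) :=
        LinearMap.congr_fun hη ((0 : (pp₀.P : Type u)), (1 : A))
      have h2' : η (lft (1 : A)) = x := by
        rw [map_zero, zero_add, LinearMap.zero_apply, zero_add,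
          show LinearMap.toSpanSingleton A (X : Type u) x (1 : A) = x from one_smul A x] at h2
        exact h2
      have hker : LinearMap.ker pp₀.π ≤ LinearMap.ker η := fun q hq => by
        rw [LinearMap.mem_ker] at hq ⊢
        have : q ∈ LinearMap.range pp₀.σ := by rw [pp₀.exact]; exact hq
        obtain ⟨p, rfl⟩ := this
        exact hη0 p
      obtain ⟨v, hv⟩ := Stmt6Aux.factor_through_surjective pp₀.π pp₀.surj η hker
      refine ⟨v, f (1 : A), ?_⟩
      have h1 : v (pp₀.π (lft (1 : A))) = η (lft (1 : A)) := LinearMap.congr_fun hv (lft (1 : A))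
      rw [← hlft (1 : A), h1, h2']
    · intro hX
      have hX₀ : Dclass pp₀.σ X := Stmt6Aux.dclass_min_of_genM T pp hD hT₀ pp₀ hm hX
      intro χ
      obtain ⟨η, hη⟩ := hX₀ (χ ∘ₗ LinearMap.inl A (pp₀.P : Type u) A)
      replace hη : η ∘ₗ pp₀.σ = χ ∘ₗ LinearMap.inl A (pp₀.P : Type u) A := hη
      set u : (ModuleCat.of A A : Type u) →ₗ[A] X :=
        (χ ∘ₗ LinearMap.inr A (pp₀.P : Type u) A : (ModuleCat.of A A : Type u) →ₗ[A] X)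
          - η ∘ₗ lft with hu
      obtain ⟨J, pX, hpX⟩ := hX
      obtain ⟨w₁, hw₁⟩ := hpX (u (1 : A))
      set w : (ModuleCat.of A A : Type u) →ₗ[A] (J →₀ (T : Type u)) :=
        LinearMap.toSpanSingleton A (J →₀ (T : Type u)) w₁ with hwdef
      have hpw : pX (w (1 : A)) = u (1 : A) := by
        have h1 : w (1 : A) = w₁ := one_smul A w₁
        rw [h1, hw₁]
      have hmemJ : memAdd T (ModuleCat.of A (J →₀ (T : Type u))) :=
        ⟨J, LinearMap.id, LinearMap.id, LinearMap.id_comp _⟩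
      obtain ⟨h, hh⟩ := happrox.2 _ hmemJ w
      refine ⟨η + pX ∘ₗ (h ∘ₗ pp₀.π), ?_⟩
      apply LinearMap.prod_ext
      · ext p
        show (η + pX ∘ₗ (h ∘ₗ pp₀.π))
            ((pp₀.σ.coprod lft) ((LinearMap.inl A (pp₀.P : Type u) A) p)) =
          χ ((LinearMap.inl A (pp₀.P : Type u) A) p)
        have e1 : (pp₀.σ.coprod lft) ((LinearMap.inl A (pp₀.P : Type u) A) p) = pp₀.σ p := by
          rw [LinearMap.inl_apply, LinearMap.coprod_apply, map_zero, add_zero]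
        rw [e1, LinearMap.add_apply, LinearMap.comp_apply, LinearMap.comp_apply, hπσ₀ p,
          map_zero, map_zero, add_zero]
        exact LinearMap.congr_fun hη p
      · apply LinearMap.ext_ring
        show (η + pX ∘ₗ (h ∘ₗ pp₀.π))
            ((pp₀.σ.coprod lft) ((LinearMap.inr A (pp₀.P : Type u) A) (1 : A))) =
          χ ((LinearMap.inr A (pp₀.P : Type u) A) (1 : A))
        have e1 : (pp₀.σ.coprod lft) ((LinearMap.inr A (pp₀.P : Type u) A) (1 : A)) =
            lft (1 : A) := by
          rw [LinearMap.inr_apply, LinearMap.coprod_apply, map_zero, zero_add]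
        rw [e1, LinearMap.add_apply, LinearMap.comp_apply, LinearMap.comp_apply, hlft (1 : A)]
        have h5 : h (f (1 : A)) = w (1 : A) := LinearMap.congr_fun hh (1 : A)
        have hfin : pX (h (f (1 : A))) = u (1 : A) := (congrArg pX h5).trans hpw
        have e2 : u (1 : A) = χ ((LinearMap.inr A (pp₀.P : Type u) A) (1 : A))
            - η (lft (1 : A)) := by
          rw [hu]
          rfl
        have key : η (lft (1 : A)) + pX (h (f (1 : A))) =
            χ ((LinearMap.inr A (pp₀.P : Type u) A) (1 : A)) := by
          rw [hfin, e2]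
          abel
        exact key
  refine ⟨{ P := ModuleCat.of A (Prod (pp₀.P : Type u) A)
            Q := pp₀.Q
            σ := LinearMap.coprod pp₀.σ lft
            π := g ∘ₗ pp₀.π
            projP := (inferInstance : Module.Projective A (Prod (pp₀.P : Type u) A))
            projQ := pp₀.projQ
            exact := hexact₁
            surj := hg.comp pp₀.surj }, ⟨?_, ?_⟩, ?_⟩
  · show IsTorsionClass (Dclass (P := ModuleCat.of A (Prod (pp₀.P : Type u) A))
      (Q := pp₀.Q) (LinearMap.coprod pp₀.σ lft))
    rw [hD₁]
    refine ⟨Stmt6Aux.genM_iso T, Stmt6Aux.genM_quot T, ?_, Stmt6Aux.genM_sums T⟩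
    rw [← hD]
    exact Stmt6Aux.dclass_extensions pp.σ pp.projP pp.projQ
  · show Dclass (P := ModuleCat.of A (Prod (pp₀.P : Type u) A))
      (Q := pp₀.Q) (LinearMap.coprod pp₀.σ lft) T₁
    rw [hD₁]
    exact hgenT₁
  · exact hD₁
end
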